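/- arXiv:1606.02621 — 9 statements merged into one kernel-verified Lean document; each statement's English description precedes it below -/
import Mathlib

section
/- Let (R, m, k) be a Henselian commutative noetherian local ring and let φ : M → F be an irreducible monomorphism of finitely generated R-modules with F free such that the image of φ is contained in mF. Then M is isomorphic to a direct summand of m. -/
universe u

/-- A homomorphism `f : M → N` of `R`-modules is *irreducible* if it is neither a split
monomorphism nor a split epimorphism, and for every factorization `f = h ∘ g` through a
finitely generated `R`-module `L`, either `g` is a split monomorphism or `h` is a split
epimorphism. -/
def IsIrreducibleHom {R : Type u} [CommRing R] {M N : Type u} [AddCommGroup M] [Module R M]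
    [AddCommGroup N] [Module R N] (f : M →ₗ[R] N) : Prop :=
  (¬ ∃ r : N →ₗ[R] M, r ∘ₗ f = LinearMap.id) ∧
  (¬ ∃ s : N →ₗ[R] M, f ∘ₗ s = LinearMap.id) ∧
  ∀ (L : Type u) [AddCommGroup L] [Module R L], Module.Finite R L →
    ∀ (g : M →ₗ[R] L) (h : L →ₗ[R] N), h ∘ₗ g = f →
      (∃ r : L →ₗ[R] M, r ∘ₗ g = LinearMap.id) ∨ (∃ s : N →ₗ[R] L, h ∘ₗ s = LinearMap.id)

/-- A split monomorphism into `𝔪` exhibits the source as a direct summand of `𝔪`. -/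
theorem summand_aux {R : Type u} [CommRing R] {M N : Type u} [AddCommGroup M] [Module R M]
    [AddCommGroup N] [Module R N] (i : M →ₗ[R] N) (p : N →ₗ[R] M)
    (hpi : p ∘ₗ i = LinearMap.id) :
    ∃ (K : Type u) (_ : AddCommGroup K) (_ : Module R K),
      Nonempty (N ≃ₗ[R] (M × K)) := by
  have hpi' : ∀ x : M, p (i x) = x := fun x => congrArg (fun f => f x) hpi
  have hmem : ∀ x : N, ((LinearMap.id : N →ₗ[R] N) - i ∘ₗ p) x ∈ LinearMap.ker p := by
    intro x
    simp [hpi']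
  set f₁ : N →ₗ[R] M × ↥(LinearMap.ker p) :=
    LinearMap.prod p (((LinearMap.id : N →ₗ[R] N) - i ∘ₗ p).codRestrict (LinearMap.ker p) hmem) with hf₁
  set f₂ : M × ↥(LinearMap.ker p) →ₗ[R] N :=
    LinearMap.coprod i (LinearMap.ker p).subtype with hf₂
  refine ⟨↥(LinearMap.ker p), inferInstance, inferInstance,
    ⟨LinearEquiv.ofLinear f₁ f₂ ?_ ?_⟩⟩
  · apply LinearMap.ext
    rintro ⟨a, k⟩
    have hk : p (k : N) = 0 := k.2
    refine Prod.ext ?_ (Subtype.ext ?_)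
    · simp [hf₁, hf₂, hpi', hk]
    · simp [hf₁, hf₂, hpi', hk]
  · apply LinearMap.ext
    intro x
    simp [hf₁, hf₂]

/-- Let `R` be a Henselian noetherian local ring and `φ : M → F` an irreducible monomorphism
of finitely generated `R`-modules with `F` free and `Im(φ) ⊆ 𝔪F`. Then `M` is isomorphic to
a direct summand of the maximal ideal `𝔪`. -/
theorem summand_of_maximalIdeal_of_irreducible_mono
    {R : Type u} [CommRing R] [IsNoetherianRing R] [IsLocalRing R] [HenselianLocalRing R]
    {M F : Type u} [AddCommGroup M] [Module R M] [Module.Finite R M]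
    [AddCommGroup F] [Module R F] [Module.Finite R F] [Module.Free R F]
    (φ : M →ₗ[R] F) (hinj : Function.Injective φ)
    (hirr : IsIrreducibleHom φ)
    (hrange : LinearMap.range φ ≤ (IsLocalRing.maximalIdeal R) • (⊤ : Submodule R F)) :
    ∃ (K : Type u) (_ : AddCommGroup K) (_ : Module R K),
      Nonempty ((IsLocalRing.maximalIdeal R) ≃ₗ[R] (M × K)) := by
  classical
  set 𝔪 : Ideal R := IsLocalRing.maximalIdeal R with h𝔪
  have hone : (1 : R) ∉ 𝔪 := by
    intro h
    exact (Ideal.IsMaximal.ne_top (IsLocalRing.maximalIdeal.isMaximal R))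
      ((Ideal.eq_top_iff_one _).2 h)
  let b := Module.Free.chooseBasis R F
  -- the index set is nonempty, otherwise φ would be a split mono (everything is trivial)
  have hne : Nonempty (Module.Free.ChooseBasisIndex R F) := by
    by_contra hempty
    have : IsEmpty (Module.Free.ChooseBasisIndex R F) := not_nonempty_iff.mp hempty
    have hF : Subsingleton F := b.repr.toEquiv.subsingleton
    have hM : Subsingleton M := ⟨fun x y => hinj (Subsingleton.elim _ _)⟩
    exact hirr.1 ⟨0, LinearMap.ext fun x => Subsingleton.elim _ _⟩
  obtain ⟨i₀⟩ := hne
  -- coordinates of elements of 𝔪F lie in 𝔪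
  have hcoord : ∀ (i) (y : F), y ∈ 𝔪 • (⊤ : Submodule R F) → b.coord i y ∈ 𝔪 := by
    intro i y hy
    refine Submodule.smul_induction_on hy (fun r hr n _ => ?_) (fun x y hx hy => ?_)
    · rw [map_smul]
      exact Ideal.mul_mem_right _ _ hr
    · rw [map_add]
      exact Ideal.add_mem _ hx hy
  -- the coefficient map c : M → R, landing in 𝔪
  set c : M →ₗ[R] R := (b.coord i₀) ∘ₗ φ with hc
  have hcm : ∀ x, c x ∈ 𝔪 := fun x => hcoord i₀ (φ x) (hrange ⟨x, rfl⟩)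
  set K : Submodule R F := LinearMap.ker (b.coord i₀) with hK
  -- decompose φ x = (c x) • b i₀ + (φ x - (c x) • b i₀), second term in K
  set ψ : M →ₗ[R] F := φ - (LinearMap.toSpanSingleton R F (b i₀)) ∘ₗ c with hψ
  have hψK : ∀ x, ψ x ∈ K := by
    intro x
    simp only [hψ, hK, LinearMap.mem_ker, LinearMap.sub_apply, LinearMap.comp_apply,
      LinearMap.toSpanSingleton_apply, map_sub, map_smul]
    simp [hc, Module.Basis.coord_apply, Module.Basis.repr_self, smul_eq_mul]
  have hψmK : ∀ x, ψ x ∈ 𝔪 • K := by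
    intro x
    have hφx : φ x ∈ 𝔪 • (⊤ : Submodule R F) := hrange ⟨x, rfl⟩
    have key : ∀ y ∈ 𝔪 • (⊤ : Submodule R F), y - (b.coord i₀ y) • b i₀ ∈ 𝔪 • K := by
      intro y hy
      refine Submodule.smul_induction_on hy (fun r hr n _ => ?_) (fun z w hz hw => ?_)
      · have hn : n - (b.coord i₀ n) • b i₀ ∈ K := by
          simp [hK, Module.Basis.coord_apply, Module.Basis.repr_self, smul_eq_mul]
        have : r • n - (b.coord i₀ (r • n)) • b i₀ = r • (n - (b.coord i₀ n) • b i₀) := by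
          rw [map_smul, smul_sub, smul_smul, smul_eq_mul]
        rw [this]
        exact Submodule.smul_mem_smul hr hn
      · have : z + w - (b.coord i₀ (z + w)) • b i₀ =
            (z - (b.coord i₀ z) • b i₀) + (w - (b.coord i₀ w) • b i₀) := by
          rw [map_add, add_smul]; abel
        rw [this]
        exact Submodule.add_mem _ hz hw
    have := key (φ x) hφx
    simpa [hψ, hc, LinearMap.toSpanSingleton_apply] using this
  -- the middle module L
  haveI : IsNoetherian R F := isNoetherian_of_isNoetherianRing_of_finite R F
  haveI : Module.Finite R ↥𝔪 := Module.Finite.iff_fg.mpr (IsNoetherian.noetherian 𝔪)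
  haveI : Module.Finite R ↥K := Module.Finite.iff_fg.mpr (IsNoetherian.noetherian K)
  set g₁ : M →ₗ[R] ↥𝔪 := c.codRestrict (𝔪 : Submodule R R) hcm with hg₁
  set g₂ : M →ₗ[R] ↥K := ψ.codRestrict K hψK with hg₂
  set g : M →ₗ[R] (↥𝔪 × ↥K) := LinearMap.prod g₁ g₂ with hg
  set h : (↥𝔪 × ↥K) →ₗ[R] F :=
    LinearMap.coprod ((LinearMap.toSpanSingleton R F (b i₀)) ∘ₗ (𝔪 : Submodule R R).subtype)
      K.subtype with hh
  have hfac : h ∘ₗ g = φ := by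
    apply LinearMap.ext
    intro x
    simp [hh, hg, hg₁, hg₂, hψ, LinearMap.toSpanSingleton_apply]
  rcases hirr.2.2 (↥𝔪 × ↥K) inferInstance g h hfac with ⟨r, hr⟩ | ⟨s, hs⟩
  · -- g splits: r ∘ g = id
    have hr' : ∀ x : M, r (g₁ x, g₂ x) = x := fun x => congrArg (fun f => f x) hr
    set r₁ : ↥𝔪 →ₗ[R] M := r ∘ₗ LinearMap.inl R ↥𝔪 ↥K with hr₁
    set r₂ : ↥K →ₗ[R] M := r ∘ₗ LinearMap.inr R ↥𝔪 ↥K with hr₂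
    have hrsum : ∀ ab : ↥𝔪 × ↥K, r ab = r₁ ab.1 + r₂ ab.2 := by
      rintro ⟨a, bk⟩
      have h1 : r₁ a = r (a, 0) := rfl
      have h2 : r₂ bk = r (0, bk) := rfl
      rw [h1, h2, ← map_add]
      congr 1
      simp
    have hsplit : ∀ x : M, r₁ (g₁ x) + r₂ (g₂ x) = x := fun x =>
      ((hrsum (g₁ x, g₂ x)).symm).trans (hr' x)
    -- r₂ (g₂ x) ∈ 𝔪 M
    have hr₂m : ∀ x : M, r₂ (g₂ x) ∈ 𝔪 • (⊤ : Submodule R M) := by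
      intro x
      have h1 : g₂ x ∈ 𝔪 • (⊤ : Submodule R ↥K) :=
        (Submodule.mem_smul_top_iff 𝔪 K (g₂ x)).mpr (hψmK x)
      have h2 : r₂ (g₂ x) ∈ Submodule.map r₂ (𝔪 • (⊤ : Submodule R ↥K)) :=
        Submodule.mem_map_of_mem h1
      rw [Submodule.map_smul''] at h2
      exact Submodule.smul_mono le_rfl le_top h2
    -- u := r₁ ∘ g₁ is surjective by Nakayama
    set u : M →ₗ[R] M := r₁ ∘ₗ g₁ with hu
    have hsup : LinearMap.range u ⊔ 𝔪 • (⊤ : Submodule R M) = ⊤ := by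
      rw [eq_top_iff]
      intro x _
      have : x = u x + r₂ (g₂ x) := by
        rw [hu]
        simpa using (hsplit x).symm
      rw [this]
      exact Submodule.add_mem _ (Submodule.mem_sup_left ⟨x, rfl⟩)
        (Submodule.mem_sup_right (hr₂m x))
    have husurj : Function.Surjective u := by
      rw [← LinearMap.range_eq_top]
      set N := LinearMap.range u with hN
      -- quotient by N is killed by Nakayama
      set Q := M ⧸ N with hQ
      haveI : Module.Finite R Q := Module.Finite.quotient R N
      have hQtop : (⊤ : Submodule R Q) ≤ 𝔪 • (⊤ : Submodule R Q) := by
        intro q _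
        obtain ⟨x, rfl⟩ := N.mkQ_surjective q
        have hx : x ∈ LinearMap.range u ⊔ 𝔪 • (⊤ : Submodule R M) := by
          rw [hsup]
          exact Submodule.mem_top
        obtain ⟨a, ha, b', hb', hab⟩ := Submodule.mem_sup.mp hx
        have : N.mkQ x = N.mkQ b' := by
          rw [← hab, map_add]
          have : N.mkQ a = 0 := (Submodule.Quotient.mk_eq_zero N).mpr ha
          simp [Submodule.mkQ_apply] at this ⊢
          simp [this]
        rw [this]
        have : N.mkQ b' ∈ Submodule.map N.mkQ (𝔪 • (⊤ : Submodule R M)) :=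
          Submodule.mem_map_of_mem hb'
        rw [Submodule.map_smul''] at this
        exact Submodule.smul_mono le_rfl le_top this
      have hjac : 𝔪 ≤ Ideal.jacobson ⊥ := by
        rw [IsLocalRing.jacobson_eq_maximalIdeal (⊥ : Ideal R) bot_ne_top]
      have htopbot := Submodule.eq_bot_of_le_smul_of_le_jacobson_bot 𝔪 (⊤ : Submodule R Q)
        (Module.Finite.iff_fg.mp inferInstance) hQtop hjac
      -- ⊤ = ⊥ in the quotient, so N = ⊤
      rw [eq_top_iff]
      intro x _
      have hx0 : N.mkQ x ∈ (⊥ : Submodule R Q) := htopbot ▸ Submodule.mem_top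
      have hx0' : N.mkQ x = 0 := (Submodule.mem_bot R).mp hx0
      have : Submodule.Quotient.mk x = (0 : Q) := hx0'
      exact (Submodule.Quotient.mk_eq_zero N).mp this
    haveI : IsNoetherian R M := isNoetherian_of_isNoetherianRing_of_finite R M
    have huinj : Function.Injective u := IsNoetherian.injective_of_surjective_endomorphism u husurj
    let ue : M ≃ₗ[R] M := LinearEquiv.ofBijective u ⟨huinj, husurj⟩
    -- p := ue⁻¹ ∘ r₁ is a retraction of g₁ : M → 𝔪
    set p : ↥𝔪 →ₗ[R] M := (ue.symm : M →ₗ[R] M) ∘ₗ r₁ with hp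
    have hpg : p ∘ₗ g₁ = LinearMap.id := by
      apply LinearMap.ext
      intro x
      have : r₁ (g₁ x) = ue x := rfl
      simp only [hp, LinearMap.comp_apply, this, LinearMap.id_apply]
      exact ue.symm_apply_apply x
    exact summand_aux g₁ p hpg
  · -- h splits: impossible, since it would put 1 in 𝔪
    exfalso
    have hs' : h (s (b i₀)) = b i₀ := congrArg (fun f => f (b i₀)) hs
    set a : ↥𝔪 := (s (b i₀)).1 with ha
    set y : ↥K := (s (b i₀)).2 with hy
    have hb1 : b.coord i₀ (b i₀) = 1 := by
      simp [Module.Basis.coord_apply, Module.Basis.repr_self]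
    have hyc : b.coord i₀ (y : F) = 0 := y.2
    have hcomp : h (s (b i₀)) = (a : R) • b i₀ + (y : F) := by
      have hsab : s (b i₀) = (a, y) := rfl
      rw [hh, hsab]
      simp only [LinearMap.coprod_apply, LinearMap.comp_apply, Submodule.coe_subtype,
        LinearMap.toSpanSingleton_apply]
    have hha : (a : R) • b i₀ + (y : F) = b i₀ := hcomp.symm.trans hs'
    have := congrArg (b.coord i₀) hha
    rw [map_add, map_smul, hb1, hyc, smul_eq_mul, mul_one, add_zero] at this
    exact hone (this ▸ a.2)
end

section
/- Let (R, m, k) be a Henselian commutative noetherian local ring and let φ : M → F be an irreducible monomorphism of finitely generated R-modules with F free such that the image of φ is contained in mF. If M is indecomposable, then for every surjective R-module homomorphism π : F → R there exists a split monomorphism η : M → m such that θ ∘ η = π ∘ φ, where θ : m → R denotes the inclusion map. -/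
universe u

/-- An `R`-module is indecomposable if it is nonzero and admits no nontrivial direct sum
decomposition. -/
def IsIndecomposableModule (R : Type u) (M : Type u) [CommRing R] [AddCommGroup M]
    [Module R M] : Prop :=
  Nontrivial M ∧ ∀ A B : Submodule R M, IsCompl A B → A = ⊥ ∨ B = ⊥

set_option maxHeartbeats 1600000 in
/-- Let `R` be a Henselian noetherian local ring and `φ : M → F` an irreducible monomorphism
of finitely generated `R`-modules with `F` free and `Im(φ) ⊆ 𝔪F`. If `M` is indecomposable,
then for every surjection `π : F → R` there is a split monomorphism `η : M → 𝔪` with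
`θ ∘ η = π ∘ φ`, where `θ : 𝔪 → R` is the inclusion. -/
theorem exists_split_mono_to_maximalIdeal_of_irreducible_mono
    {R : Type u} [CommRing R] [IsNoetherianRing R] [IsLocalRing R] [HenselianLocalRing R]
    {M F : Type u} [AddCommGroup M] [Module R M] [Module.Finite R M]
    [AddCommGroup F] [Module R F] [Module.Finite R F] [Module.Free R F]
    (φ : M →ₗ[R] F) (hinj : Function.Injective φ)
    (hirr : IsIrreducibleHom φ)
    (hrange : LinearMap.range φ ≤ (IsLocalRing.maximalIdeal R) • (⊤ : Submodule R F))
    (hM : IsIndecomposableModule R M)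
    (π : F →ₗ[R] R) (hπ : Function.Surjective π) :
    ∃ η : M →ₗ[R] (IsLocalRing.maximalIdeal R),
      (∃ r : (IsLocalRing.maximalIdeal R) →ₗ[R] M, r ∘ₗ η = LinearMap.id) ∧
      (IsLocalRing.maximalIdeal R).subtype ∘ₗ η = π ∘ₗ φ := by
  classical
  set I := IsLocalRing.maximalIdeal R with hI
  -- section of π
  obtain ⟨x0, hx0⟩ := hπ 1
  set s : R →ₗ[R] F := LinearMap.toSpanSingleton R F x0 with hsdef
  have hs : ∀ c : R, π (s c) = c := by
    intro c
    simp [hsdef, LinearMap.toSpanSingleton_apply, hx0]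
  set p : F →ₗ[R] F := LinearMap.id - s ∘ₗ π with hpdef
  have hpker : ∀ y, π (p y) = 0 := by
    intro y; simp [hpdef, hs]
  have hφmem : ∀ x, φ x ∈ I • (⊤ : Submodule R F) := fun x =>
    hrange ⟨x, rfl⟩
  have hmem : ∀ x, π (φ x) ∈ I := by
    intro x
    have h1 : π (φ x) ∈ Submodule.map π (I • (⊤ : Submodule R F)) :=
      ⟨φ x, hφmem x, rfl⟩
    rw [Submodule.map_smul''] at h1
    have h2 : I • (Submodule.map π ⊤) ≤ I :=
      Submodule.smul_le.mpr fun c hc n _ => by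
        simpa [smul_eq_mul] using I.mul_mem_right n hc
    exact h2 h1
  set η : M →ₗ[R] I := (π ∘ₗ φ).codRestrict I hmem with hηdef
  set ψ : M →ₗ[R] LinearMap.ker π :=
    (p ∘ₗ φ).codRestrict (LinearMap.ker π) (fun x => hpker (φ x)) with hψdef
  set L := (↥I × ↥(LinearMap.ker π)) with hL
  set g : M →ₗ[R] L := LinearMap.prod η ψ with hgdef
  set h : L →ₗ[R] F := (s ∘ₗ I.subtype) ∘ₗ LinearMap.fst R ↥I ↥(LinearMap.ker π)
      + (LinearMap.ker π).subtype ∘ₗ LinearMap.snd R ↥I ↥(LinearMap.ker π) with hhdef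
  have hfact : h ∘ₗ g = φ := by
    ext x
    show h (g x) = φ x
    rw [show h (g x) = s (π (φ x)) + p (φ x) from rfl,
      show p (φ x) = φ x - s (π (φ x)) from rfl]
    abel
  have hLfin : Module.Finite R L := by
    have : IsNoetherian R F := inferInstance
    have : IsNoetherian R R := inferInstance
    infer_instance
  -- h is not a split epimorphism
  have hnotepi : ¬ ∃ t : F →ₗ[R] L, h ∘ₗ t = LinearMap.id := by
    rintro ⟨t, ht⟩
    have h1 : π x0 ∈ I := by
      have : π (h (t x0)) ∈ I := by
        have : ∀ l : L, π (h l) ∈ I := by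
          rintro ⟨a, b⟩
          have : π (h (a, b)) = (a : R) := by
            rw [show h (a, b) = s (a : R) + (b : F) from rfl, map_add, hs,
              LinearMap.mem_ker.mp b.2, add_zero]
          rw [this]; exact a.2
        exact this _
      rwa [show h (t x0) = x0 from congrArg (· x0) ht] at this
    rw [hx0] at h1
    exact (Ideal.ne_top_iff_one I).mp (IsLocalRing.maximalIdeal.isMaximal R).ne_top h1
  -- irreducibility gives a retraction of g
  obtain ⟨r, hr⟩ | hepi := hirr.2.2 L hLfin g h hfact
  swap
  · exact absurd hepi hnotepi
  -- split r into components
  set r₁ : ↥I →ₗ[R] M := r ∘ₗ LinearMap.inl R ↥I ↥(LinearMap.ker π) with hr₁def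
  set q : F →ₗ[R] M := (r ∘ₗ LinearMap.inr R ↥I ↥(LinearMap.ker π)) ∘ₗ
      p.codRestrict (LinearMap.ker π) hpker with hqdef
  set e : M →ₗ[R] M := r₁ ∘ₗ η with hedef
  have hsplit : ∀ x : M, e x + q (φ x) = x := by
    intro x
    have h0 : r (g x) = x := congrArg (· x) hr
    calc e x + q (φ x) = r (η x, 0) + r (0, ψ x) := rfl
      _ = r ((η x, 0) + (0, ψ x)) := (map_add r _ _).symm
      _ = r (g x) := by
            rw [show g x = (η x, 0) + (0, ψ x) by
              show (η x, ψ x) = _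
              rw [show (η x, (0 : ↥(LinearMap.ker π))) + ((0 : ↥I), ψ x)
                  = (η x + 0, 0 + ψ x) from rfl, add_zero, zero_add]]
      _ = x := h0
  -- e is surjective
  have hq : ∀ x : M, q (φ x) ∈ I • (⊤ : Submodule R M) := by
    intro x
    have h1 : q (φ x) ∈ Submodule.map q (I • (⊤ : Submodule R F)) := ⟨φ x, hφmem x, rfl⟩
    rw [Submodule.map_smul''] at h1
    exact Submodule.smul_mono le_rfl le_top h1
  have hle : (⊤ : Submodule R M) ≤ LinearMap.range e ⊔ I • (⊤ : Submodule R M) := by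
    intro x _
    have : x = e x + q (φ x) := (hsplit x).symm
    rw [this]
    exact Submodule.add_mem_sup ⟨x, rfl⟩ (hq x)
  have hjac : I ≤ Ideal.jacobson ⊥ := IsLocalRing.maximalIdeal_le_jacobson ⊥
  have hrange_top : (⊤ : Submodule R M) ≤ LinearMap.range e :=
    Submodule.le_of_le_smul_of_le_jacobson_bot (IsNoetherian.noetherian _) hjac hle
  have hesurj : Function.Surjective e := by
    rw [← LinearMap.range_eq_top]
    exact top_le_iff.mp hrange_top
  have hebij : Function.Bijective e :=
    OrzechProperty.bijective_of_surjective_endomorphism e hesurj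
  set E := LinearEquiv.ofBijective e hebij with hEdef
  refine ⟨η, ⟨E.symm.toLinearMap ∘ₗ r₁, ?_⟩, ?_⟩
  · ext x
    have : E (x : M) = e x := rfl
    simp only [LinearMap.comp_apply, LinearMap.id_apply, LinearEquiv.coe_coe]
    have h2 : r₁ (η x) = e x := rfl
    rw [h2, show e x = E x from rfl, LinearEquiv.symm_apply_apply]
  · ext x
    simp [hηdef]
end

section
/- Let (R, m, k) be a commutative noetherian local ring and let φ : F → M be an irreducible epimorphism of finitely generated R-modules with F free. Then the kernel of φ is isomorphic to k as an R-module. -/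
universe u

/-- If `φ : F → M` is an irreducible epimorphism of finitely generated modules over a
commutative noetherian local ring `(R, 𝔪, k)` with `F` free, then `ker φ ≅ k`. -/
theorem ker_of_irreducible_epi_iso_residueField
    {R : Type u} [CommRing R] [IsNoetherianRing R] [IsLocalRing R]
    {F M : Type u} [AddCommGroup F] [Module R F] [Module.Finite R F] [Module.Free R F]
    [AddCommGroup M] [Module R M] [Module.Finite R M]
    (φ : F →ₗ[R] M) (hsurj : Function.Surjective φ) (hirr : IsIrreducibleHom φ) :
    Nonempty ((LinearMap.ker φ) ≃ₗ[R] (IsLocalRing.ResidueField R)) := by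
  obtain ⟨hnm, hne, hfac⟩ := hirr
  classical
  set I := IsLocalRing.maximalIdeal R with hIdef
  have hjac : I ≤ Ideal.jacobson ⊥ :=
    le_of_eq (IsLocalRing.jacobson_eq_maximalIdeal ⊥ bot_ne_top).symm
  -- Step A : ker φ ≠ ⊥
  have hK : LinearMap.ker φ ≠ ⊥ := by
    intro h
    apply hne
    have hinj : Function.Injective φ := LinearMap.ker_eq_bot.mp h
    let e := LinearEquiv.ofBijective φ ⟨hinj, hsurj⟩
    refine ⟨(e.symm : M →ₗ[R] F), ?_⟩
    ext m
    exact e.apply_symm_apply m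
  -- Step B : ker φ ≤ I • ⊤
  have hKm : LinearMap.ker φ ≤ I • (⊤ : Submodule R F) := by
    intro x hx
    by_contra hxm
    set b := Module.Free.chooseBasis R F with hb
    obtain ⟨j, hj⟩ : ∃ j, b.repr x j ∉ I := by
      by_contra hall
      push_neg at hall
      apply hxm
      have hsum : (∑ i, b.repr x i • b i) ∈ I • (⊤ : Submodule R F) :=
        Submodule.sum_mem _ (fun i _ => Submodule.smul_mem_smul (hall i) trivial)
      rwa [b.sum_repr] at hsum
    have hu : IsUnit (b.repr x j) := IsLocalRing.notMem_maximalIdeal.mp hj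
    let lam : F →ₗ[R] R := (↑hu.unit⁻¹ : R) • b.coord j
    have hlamx : lam x = 1 := by
      show (↑hu.unit⁻¹ : R) * b.coord j x = 1
      rw [Module.Basis.coord_apply]
      exact hu.val_inv_mul
    let L := LinearMap.ker lam
    let g : F →ₗ[R] L := LinearMap.codRestrict L (LinearMap.id - lam.smulRight x)
      (fun y => by
        rw [LinearMap.mem_ker, LinearMap.sub_apply, LinearMap.id_apply,
          LinearMap.smulRight_apply, map_sub, map_smul, hlamx, smul_eq_mul, mul_one,
          sub_self])
    let h : L →ₗ[R] M := φ ∘ₗ L.subtype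
    have hcomp : h ∘ₗ g = φ := by
      ext y
      have hx0 : φ x = 0 := hx
      simp [h, g, L, hx0]
    rcases hfac L inferInstance g h hcomp with ⟨r, hr⟩ | ⟨s, hs⟩
    · have hx0 : x ≠ 0 := fun h0 => hxm (h0 ▸ Submodule.zero_mem _)
      apply hx0
      have hgx : g x = 0 := by
        apply Subtype.ext
        show x - lam x • x = 0
        rw [hlamx, one_smul, sub_self]
      have := LinearMap.congr_fun hr x
      rw [LinearMap.comp_apply, hgx, map_zero] at this
      exact this.symm
    · exact hne ⟨L.subtype ∘ₗ s, by rw [← LinearMap.comp_assoc]; exact hs⟩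
  -- Step C : every nonzero submodule of ker φ equals ker φ
  have hsimple : ∀ N : Submodule R F, N ≤ LinearMap.ker φ → N ≠ ⊥ → N = LinearMap.ker φ := by
    intro N hNK hN0
    obtain ⟨x, hxN, hx0⟩ := Submodule.exists_mem_ne_zero_of_ne_bot hN0
    let g := N.mkQ
    let h := N.liftQ φ hNK
    have hcomp : h ∘ₗ g = φ := N.liftQ_mkQ φ hNK
    rcases hfac (F ⧸ N) inferInstance g h hcomp with ⟨r, hr⟩ | ⟨s, hs⟩
    · exfalso
      apply hx0
      have hgx : g x = 0 := (Submodule.Quotient.mk_eq_zero N).mpr hxN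
      have := LinearMap.congr_fun hr x
      rw [LinearMap.comp_apply, hgx, map_zero] at this
      exact this.symm
    · have hkh : LinearMap.ker h ≤ I • (LinearMap.ker h) := by
        intro z hz
        obtain ⟨y, rfl⟩ := N.mkQ_surjective z
        have hyK : y ∈ LinearMap.ker φ := by
          rw [LinearMap.mem_ker, ← hcomp]
          exact hz
        have hz1 : N.mkQ y ∈ I • (⊤ : Submodule R (F ⧸ N)) := by
          have h1 : N.mkQ y ∈ Submodule.map N.mkQ (I • (⊤ : Submodule R F)) :=
            ⟨y, hKm hyK, rfl⟩
          rwa [Submodule.map_smul'', Submodule.map_top, Submodule.range_mkQ] at h1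
        let p : (F ⧸ N) →ₗ[R] (F ⧸ N) := LinearMap.id - s ∘ₗ h
        have hpz : p (N.mkQ y) = N.mkQ y := by
          have hz0 : h (N.mkQ y) = 0 := hz
          show N.mkQ y - s (h (N.mkQ y)) = N.mkQ y
          rw [hz0, map_zero, sub_zero]
        have hrange : Submodule.map p (I • (⊤ : Submodule R (F ⧸ N))) ≤ I • LinearMap.ker h := by
          rw [Submodule.map_smul'']
          refine Submodule.smul_mono le_rfl ?_
          rintro w ⟨v, -, rfl⟩
          rw [LinearMap.mem_ker]
          have hsv := LinearMap.congr_fun hs (h v)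
          simp only [p, LinearMap.sub_apply, LinearMap.id_apply, LinearMap.comp_apply, map_sub]
          rw [LinearMap.comp_apply] at hsv
          rw [hsv, LinearMap.id_apply, sub_self]
        exact hpz ▸ hrange ⟨_, hz1, rfl⟩
      have hbot : LinearMap.ker h = ⊥ :=
        Submodule.eq_bot_of_le_smul_of_le_jacobson_bot I _ (IsNoetherian.noetherian _) hkh hjac
      refine le_antisymm hNK ?_
      intro y hy
      have hmem : N.mkQ y ∈ LinearMap.ker h := by
        rw [LinearMap.mem_ker, ← LinearMap.comp_apply, hcomp]
        exact hy
      rw [hbot, Submodule.mem_bot] at hmem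
      exact (Submodule.Quotient.mk_eq_zero N).mp hmem
  -- Step D : build the isomorphism
  obtain ⟨x, hxK, hx0⟩ := Submodule.exists_mem_ne_zero_of_ne_bot hK
  have hIK : I • LinearMap.ker φ = ⊥ := by
    by_contra hne'
    have heq := hsimple (I • LinearMap.ker φ) Submodule.smul_le_right hne'
    exact hK (Submodule.eq_bot_of_le_smul_of_le_jacobson_bot I _
      (IsNoetherian.noetherian _) (le_of_eq heq.symm) hjac)
  let xK : ↥(LinearMap.ker φ) := ⟨x, hxK⟩
  let ρ := LinearMap.toSpanSingleton R (↥(LinearMap.ker φ)) xK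
  have hspan : (R ∙ x) = LinearMap.ker φ := by
    refine hsimple _ ((Submodule.span_singleton_le_iff_mem x _).mpr hxK) ?_
    rw [Ne, Submodule.span_singleton_eq_bot]
    exact hx0
  have hρsurj : Function.Surjective ρ := by
    rw [← LinearMap.range_eq_top, ← LinearMap.span_singleton_eq_range]
    apply Submodule.map_injective_of_injective (LinearMap.ker φ).injective_subtype
    rw [Submodule.map_span, Set.image_singleton, Submodule.map_top, Submodule.range_subtype]
    exact hspan
  have hker : LinearMap.ker ρ = I := by
    refine le_antisymm (IsLocalRing.le_maximalIdeal ?_) ?_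
    · intro htop
      have h1 : (1 : R) ∈ LinearMap.ker ρ := htop ▸ Submodule.mem_top
      rw [LinearMap.mem_ker] at h1
      apply hx0
      have : ρ 1 = xK := one_smul R xK
      rw [this] at h1
      exact congrArg Subtype.val h1
    · intro r hr
      rw [LinearMap.mem_ker]
      apply Subtype.ext
      have : r • x ∈ I • LinearMap.ker φ := Submodule.smul_mem_smul hr hxK
      rw [hIK, Submodule.mem_bot] at this
      exact this
  let σ := Algebra.linearMap R (IsLocalRing.ResidueField R)
  have hσsurj : Function.Surjective σ := Ideal.Quotient.mk_surjective
  have hkσ : LinearMap.ker σ = I := by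
    ext r
    rw [LinearMap.mem_ker]
    show algebraMap R (IsLocalRing.ResidueField R) r = 0 ↔ r ∈ I
    rw [IsLocalRing.ResidueField.algebraMap_eq]
    exact IsLocalRing.residue_eq_zero_iff r
  exact ⟨((ρ.quotKerEquivOfSurjective hρsurj).symm.trans
    (Submodule.quotEquivOfEq _ _ (hker.trans hkσ.symm))).trans
    (σ.quotKerEquivOfSurjective hσsurj)⟩
end

section
/- Let (R, m, k) be a commutative noetherian local ring and let φ : F → M be an irreducible epimorphism of finitely generated R-modules with F free. Assume that the endomorphism ring End_R(M) is a local ring, and let ι : R → F be a split monomorphism. Then the composition φ ∘ ι : R → M is irreducible; in particular, φ ∘ ι is either surjective or injective. -/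
universe u

/-- In a (possibly noncommutative) local ring, every idempotent is `0` or `1`. -/
lemma idem_zero_or_one {A : Type*} [Ring A] [IsLocalRing A] (e : A) (he : e * e = e) :
    e = 0 ∨ e = 1 := by
  rcases IsLocalRing.isUnit_or_isUnit_of_add_one (a := e) (b := 1 - e) (by abel) with hu | hu
  · right
    exact hu.mul_left_cancel (by rw [he, mul_one])
  · left
    have h1 : (1 - e) * (1 - e) = 1 - e := by
      rw [mul_sub, mul_one, sub_mul, one_mul, he]; abel
    have h2 : (1 : A) - e = 1 := hu.mul_left_cancel (by rw [h1, mul_one])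
    exact sub_eq_self.mp h2

/-- Let `φ : F → M` be an irreducible epimorphism of finitely generated modules over a
commutative noetherian local ring with `F` free, assume `End_R(M)` is local, and let
`ι : R → F` be a split monomorphism. Then `φ ∘ ι` is irreducible; in particular it is
either surjective or injective. -/
theorem comp_split_mono_irreducible
    {R : Type u} [CommRing R] [IsNoetherianRing R] [IsLocalRing R]
    {F M : Type u} [AddCommGroup F] [Module R F] [Module.Finite R F] [Module.Free R F]
    [AddCommGroup M] [Module R M] [Module.Finite R M]
    (φ : F →ₗ[R] M) (hsurj : Function.Surjective φ) (hirr : IsIrreducibleHom φ)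
    (hEnd : IsLocalRing (Module.End R M))
    (ι : R →ₗ[R] F) (hι : ∃ r : F →ₗ[R] R, r ∘ₗ ι = LinearMap.id) :
    IsIrreducibleHom (φ ∘ₗ ι) ∧
      (Function.Surjective (φ ∘ₗ ι) ∨ Function.Injective (φ ∘ₗ ι)) := by
  obtain ⟨r, hr⟩ := hι
  have hr' : ∀ a : R, r (ι a) = a := fun a => congrArg (fun f => f a) hr
  set ψ : R →ₗ[R] M := φ ∘ₗ ι with hψ
  -- ψ is not a split epimorphism
  have not_split_epi : ¬ ∃ s : M →ₗ[R] R, ψ ∘ₗ s = LinearMap.id := by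
    rintro ⟨s, hs⟩
    exact hirr.2.1 ⟨ι ∘ₗ s, by rw [← LinearMap.comp_assoc]; exact hs⟩
  -- ψ is not a split monomorphism
  have not_split_mono : ¬ ∃ p : M →ₗ[R] R, p ∘ₗ ψ = LinearMap.id := by
    rintro ⟨p, hp⟩
    have hp' : ∀ a : R, p (ψ a) = a := fun a => congrArg (fun f => f a) hp
    have he : (ψ ∘ₗ p : Module.End R M) * (ψ ∘ₗ p) = ψ ∘ₗ p := by
      ext m
      simp only [Module.End.mul_apply, LinearMap.comp_apply, hp']
    rcases idem_zero_or_one (A := Module.End R M) (ψ ∘ₗ p) he with h0 | h1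
    · -- ψ ∘ p = 0 : contradiction with p ∘ ψ = id (R nontrivial)
      have h1' : p (ψ 1) = 1 := hp' 1
      have hz : ψ (p (ψ 1)) = 0 := congrArg (fun f : Module.End R M => f (ψ 1)) h0
      rw [h1'] at hz
      have : p (ψ 1) = 0 := by rw [hz, map_zero]
      rw [h1'] at this
      exact one_ne_zero this
    · -- ψ ∘ p = 1 : then φ is a split epimorphism, contradiction
      refine hirr.2.1 ⟨ι ∘ₗ p, ?_⟩
      ext m
      have : (ψ ∘ₗ p) m = m := congrArg (fun f : Module.End R M => f m) h1
      simpa [hψ, LinearMap.comp_apply] using this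
  -- the factorization property for ψ
  have fact : ∀ (L : Type u) [AddCommGroup L] [Module R L], Module.Finite R L →
      ∀ (g : R →ₗ[R] L) (h : L →ₗ[R] M), h ∘ₗ g = ψ →
        (∃ τ : L →ₗ[R] R, τ ∘ₗ g = LinearMap.id) ∨
        (∃ s : M →ₗ[R] L, h ∘ₗ s = LinearMap.id) := by
    intro L _ _ hLfin g h hfac
    have hfac' : ∀ a : R, h (g a) = ψ a := fun a => congrArg (fun f => f a) hfac
    set g' : F →ₗ[R] L × F := (g ∘ₗ r).prod (LinearMap.id - ι ∘ₗ r) with hg'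
    set h' : L × F →ₗ[R] M := h.coprod φ with hh'
    have hfacφ : h' ∘ₗ g' = φ := by
      ext x
      simp only [hg', hh', LinearMap.comp_apply, LinearMap.prod_apply, Function.prod,
        LinearMap.coprod_apply, LinearMap.sub_apply, LinearMap.id_apply, map_sub]
      rw [hfac']
      simp only [hψ, LinearMap.comp_apply]
      abel
    rcases hirr.2.2 (L × F) inferInstance g' h' hfacφ with ⟨ρ, hρ⟩ | ⟨s, hs⟩
    · -- g' split mono ⇒ g split mono
      left
      refine ⟨r ∘ₗ ρ ∘ₗ LinearMap.inl R L F, ?_⟩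
      apply LinearMap.ext; intro a
      have h1 : g' (ι a) = (g a, 0) := by
        simp only [hg', LinearMap.prod_apply, Function.prod, LinearMap.comp_apply,
          LinearMap.sub_apply, LinearMap.id_apply, hr' a, sub_self]
      have h2 : ρ (g' (ι a)) = ι a := congrArg (fun f => f (ι a)) hρ
      rw [h1] at h2
      simp only [LinearMap.comp_apply, LinearMap.inl_apply, LinearMap.id_apply]
      rw [h2, hr' a]
    · -- h' split epi ⇒ use locality of End R M
      have hs' : ∀ m : M, h (s m).1 + φ (s m).2 = m := by
        intro m
        have := congrArg (fun f => f m) hs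
        simpa [hh', LinearMap.comp_apply, LinearMap.coprod_apply] using this
      set s₁ : M →ₗ[R] L := (LinearMap.fst R L F) ∘ₗ s with hs₁
      set s₂ : M →ₗ[R] F := (LinearMap.snd R L F) ∘ₗ s with hs₂
      have key : (h ∘ₗ s₁ : Module.End R M) + φ ∘ₗ s₂ = 1 := by
        ext m
        simpa [hs₁, hs₂, LinearMap.comp_apply] using hs' m
      rcases IsLocalRing.isUnit_or_isUnit_of_add_one key with hu | hu
      · -- h ∘ s₁ is a unit ⇒ h split epi
        right
        obtain ⟨u, hu⟩ := hu
        refine ⟨s₁ ∘ₗ (↑u⁻¹ : Module.End R M), ?_⟩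
        have : (h ∘ₗ s₁) ∘ₗ (↑u⁻¹ : Module.End R M) = LinearMap.id := by
          rw [← Module.End.mul_eq_comp, ← hu, u.mul_inv]; rfl
        rw [← LinearMap.comp_assoc]; exact this
      · -- φ ∘ s₂ is a unit ⇒ φ split epi, contradiction
        exfalso
        obtain ⟨u, hu⟩ := hu
        refine hirr.2.1 ⟨s₂ ∘ₗ (↑u⁻¹ : Module.End R M), ?_⟩
        have : (φ ∘ₗ s₂) ∘ₗ (↑u⁻¹ : Module.End R M) = LinearMap.id := by
          rw [← Module.End.mul_eq_comp, ← hu, u.mul_inv]; rfl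
        rw [← LinearMap.comp_assoc]; exact this
  refine ⟨⟨not_split_mono, not_split_epi, fact⟩, ?_⟩
  -- surjective or injective: factor ψ through its image
  have hNoeth : IsNoetherian R M := inferInstance
  have hfin : Module.Finite R ↥(LinearMap.range ψ) :=
    Module.Finite.iff_fg.mpr (IsNoetherian.noetherian _)
  have hcomp : (LinearMap.range ψ).subtype ∘ₗ ψ.rangeRestrict = ψ := by
    ext; simp
  rcases fact ↥(LinearMap.range ψ) hfin ψ.rangeRestrict (LinearMap.range ψ).subtype hcomp with
    ⟨τ, hτ⟩ | ⟨s, hs⟩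
  · right
    have hinj : Function.Injective ψ.rangeRestrict := by
      intro a b hab
      have := congrArg τ hab
      simpa [LinearMap.comp_apply] using
        (congrArg (fun f => f a) hτ).symm.trans
          ((congrArg τ hab).trans (congrArg (fun f => f b) hτ))
    intro a b hab
    apply hinj
    exact Subtype.ext (by simpa [LinearMap.rangeRestrict] using hab)
  · left
    intro m
    have := congrArg (fun f => f m) hs
    simp only [LinearMap.comp_apply, LinearMap.id_apply] at this
    obtain ⟨a, ha⟩ := (s m).2
    exact ⟨a, by rw [ha]; simpa using this⟩
end

section
/- Let (R, m, k) be a commutative noetherian local ring and let f : M → N be a homomorphism of finitely generated R-modules. Then the following are equivalent: (i) f is irreducible; (ii) for every finitely generated R-module X, the homomorphism f ⊕ id_X : M ⊕ X → N ⊕ X is irreducible; (iii) there exists a finitely generated R-module X such that f ⊕ id_X : M ⊕ X → N ⊕ X is irreducible. -/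
universe u

section Aux

variable {R : Type u} [CommRing R] [IsNoetherianRing R]
  {M N : Type u} [AddCommGroup M] [Module R M] [AddCommGroup N] [Module R N]

/-- If `f` is irreducible, so is `f ⊕ id_X`. -/
theorem IsIrreducibleHom.prodMap_id (f : M →ₗ[R] N) (hf : IsIrreducibleHom f)
    (X : Type u) [AddCommGroup X] [Module R X] (hX : Module.Finite R X) :
    IsIrreducibleHom (f.prodMap (LinearMap.id (R := R) (M := X))) := by
  obtain ⟨hf1, hf2, hf3⟩ := hf
  refine ⟨?_, ?_, ?_⟩
  · rintro ⟨r, hr⟩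
    refine hf1 ⟨(LinearMap.fst R M X) ∘ₗ r ∘ₗ (LinearMap.inl R N X), LinearMap.ext fun m => ?_⟩
    have h1 := DFunLike.congr_fun hr (m, (0 : X))
    simp only [LinearMap.comp_apply, LinearMap.prodMap_apply, LinearMap.id_apply,
      Prod.map_apply] at h1 ⊢
    simpa using congrArg Prod.fst h1
  · rintro ⟨s, hs⟩
    refine hf2 ⟨(LinearMap.fst R M X) ∘ₗ s ∘ₗ (LinearMap.inl R N X), LinearMap.ext fun n => ?_⟩
    have h1 := DFunLike.congr_fun hs (n, (0 : X))
    simp only [LinearMap.comp_apply, LinearMap.prodMap_apply, LinearMap.id_apply,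
      Prod.map_apply] at h1 ⊢
    simpa using congrArg Prod.fst h1
  · intro L _ _ hL g h hgh
    haveI := hL
    set g₁ : M →ₗ[R] L := g ∘ₗ LinearMap.inl R M X with hg₁def
    set g₂ : X →ₗ[R] L := g ∘ₗ LinearMap.inr R M X with hg₂def
    set h₁ : L →ₗ[R] N := LinearMap.fst R N X ∘ₗ h with hh₁def
    set h₂ : L →ₗ[R] X := LinearMap.snd R N X ∘ₗ h with hh₂def
    have key : ∀ (m : M) (x : X), h (g (m, x)) = (f m, x) := fun m x => by
      simpa using DFunLike.congr_fun hgh (m, x)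
    have h11 : ∀ m, h₁ (g₁ m) = f m := fun m => by
      simpa [hg₁def, hh₁def] using congrArg Prod.fst (key m 0)
    have h21 : ∀ m, h₂ (g₁ m) = 0 := fun m => by
      simpa [hg₁def, hh₂def] using congrArg Prod.snd (key m 0)
    have h12 : ∀ x, h₁ (g₂ x) = 0 := fun x => by
      simpa [hg₂def, hh₁def] using congrArg Prod.fst (key 0 x)
    have h22 : ∀ x, h₂ (g₂ x) = x := fun x => by
      simpa [hg₂def, hh₂def] using congrArg Prod.snd (key 0 x)
    set L' : Submodule R L := LinearMap.ker h₂ with hL'def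
    haveI : Module.Finite R L' := inferInstance
    set g' : M →ₗ[R] L' := g₁.codRestrict L' (fun m => LinearMap.mem_ker.mpr (h21 m)) with hg'def
    set h' : L' →ₗ[R] N := h₁ ∘ₗ L'.subtype with hh'def
    have hcomp : h' ∘ₗ g' = f := LinearMap.ext fun m => by
      simp [hg'def, hh'def, LinearMap.codRestrict_apply, h11]
    rcases hf3 L' inferInstance g' h' hcomp with ⟨r, hr⟩ | ⟨s, hs⟩
    · -- split mono case
      left
      have hπmem : ∀ l : L, l - g₂ (h₂ l) ∈ L' := fun l => by
        simp [hL'def, LinearMap.mem_ker, map_sub, h22]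
      set π : L →ₗ[R] L' := (LinearMap.id - g₂ ∘ₗ h₂).codRestrict L' (fun l => hπmem l) with hπdef
      refine ⟨(r ∘ₗ π).prod h₂, LinearMap.ext fun p => ?_⟩
      obtain ⟨m, x⟩ := p
      have hgmx : g (m, x) = g₁ m + g₂ x := by
        have : ((m, x) : M × X) = (m, 0) + (0, x) := by simp
        rw [this, map_add]; rfl
      have hsnd : h₂ (g (m, x)) = x := by rw [hgmx, map_add, h21, h22, zero_add]
      have hπval : π (g (m, x)) = g' m := by
        apply Subtype.ext
        simp only [hπdef, LinearMap.codRestrict_apply, LinearMap.sub_apply,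
          LinearMap.id_apply, LinearMap.comp_apply, hg'def]
        rw [hsnd, hgmx]
        abel
      have hrg' : r (g' m) = m := DFunLike.congr_fun hr m
      simp only [LinearMap.comp_apply, LinearMap.prod_apply, Function.prod, LinearMap.id_apply]
      rw [hπval, hrg', hsnd]
    · -- split epi case
      right
      refine ⟨L'.subtype ∘ₗ s ∘ₗ LinearMap.fst R N X + g₂ ∘ₗ LinearMap.snd R N X,
        LinearMap.ext fun p => ?_⟩
      obtain ⟨n, x⟩ := p
      have hsn : h₁ (L'.subtype (s n)) = n := by
        simpa [hh'def] using DFunLike.congr_fun hs n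
      have hsn2 : h₂ (L'.subtype (s n)) = 0 := (s n).2
      simp only [LinearMap.comp_apply, LinearMap.add_apply, LinearMap.fst_apply,
        LinearMap.snd_apply, LinearMap.id_apply, map_add]
      have hfst : h₁ (L'.subtype (s n) + g₂ x) = n := by
        rw [map_add, hsn, h12, add_zero]
      have hsnd : h₂ (L'.subtype (s n) + g₂ x) = x := by
        rw [map_add, hsn2, h22, zero_add]
      have : h (L'.subtype (s n) + g₂ x) =
          (h₁ (L'.subtype (s n) + g₂ x), h₂ (L'.subtype (s n) + g₂ x)) := rfl
      rw [← map_add, this, hfst, hsnd]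

/-- If `f ⊕ id_X` is irreducible for some f.g. `X`, then `f` is irreducible. -/
theorem IsIrreducibleHom.of_prodMap_id (f : M →ₗ[R] N)
    (X : Type u) [AddCommGroup X] [Module R X] (hX : Module.Finite R X)
    (hF : IsIrreducibleHom (f.prodMap (LinearMap.id (R := R) (M := X)))) :
    IsIrreducibleHom f := by
  obtain ⟨hF1, hF2, hF3⟩ := hF
  refine ⟨?_, ?_, ?_⟩
  · rintro ⟨r, hr⟩
    refine hF1 ⟨r.prodMap LinearMap.id, LinearMap.ext fun p => ?_⟩
    have := DFunLike.congr_fun hr p.1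
    simp only [LinearMap.comp_apply, LinearMap.prodMap_apply, LinearMap.id_apply,
      Prod.map_apply] at this ⊢
    exact Prod.ext this rfl
  · rintro ⟨s, hs⟩
    refine hF2 ⟨s.prodMap LinearMap.id, LinearMap.ext fun p => ?_⟩
    have := DFunLike.congr_fun hs p.1
    simp only [LinearMap.comp_apply, LinearMap.prodMap_apply, LinearMap.id_apply,
      Prod.map_apply] at this ⊢
    exact Prod.ext this rfl
  · intro L _ _ hL g h hgh
    haveI := hL
    have hcomp : (h.prodMap (LinearMap.id (R := R) (M := X))) ∘ₗ
        (g.prodMap (LinearMap.id (R := R) (M := X))) =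
        f.prodMap (LinearMap.id (R := R) (M := X)) := LinearMap.ext fun p => by
      have := DFunLike.congr_fun hgh p.1
      simp only [LinearMap.comp_apply, LinearMap.prodMap_apply, LinearMap.id_apply,
        Prod.map_apply] at this ⊢
      exact Prod.ext this rfl
    rcases hF3 (L × X) inferInstance (g.prodMap LinearMap.id) (h.prodMap LinearMap.id) hcomp
      with ⟨r, hr⟩ | ⟨s, hs⟩
    · left
      refine ⟨LinearMap.fst R M X ∘ₗ r ∘ₗ LinearMap.inl R L X, LinearMap.ext fun m => ?_⟩
      have h1 := DFunLike.congr_fun hr (m, (0 : X))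
      simp only [LinearMap.comp_apply, LinearMap.prodMap_apply, LinearMap.id_apply,
        Prod.map_apply] at h1 ⊢
      simpa using congrArg Prod.fst h1
    · right
      refine ⟨LinearMap.fst R L X ∘ₗ s ∘ₗ LinearMap.inl R N X, LinearMap.ext fun n => ?_⟩
      have h1 := DFunLike.congr_fun hs (n, (0 : X))
      simp only [LinearMap.comp_apply, LinearMap.prodMap_apply, LinearMap.id_apply,
        Prod.map_apply] at h1 ⊢
      simpa using congrArg Prod.fst h1

end Aux

/-- For a homomorphism `f : M → N` of finitely generated modules over a commutative
noetherian local ring, the following are equivalent: (i) `f` is irreducible;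
(ii) `f ⊕ id_X` is irreducible for every finitely generated module `X`;
(iii) `f ⊕ id_X` is irreducible for some finitely generated module `X`. -/
theorem irreducible_iff_prodMap_id_irreducible
    {R : Type u} [CommRing R] [IsNoetherianRing R] [IsLocalRing R]
    {M N : Type u} [AddCommGroup M] [Module R M] [Module.Finite R M]
    [AddCommGroup N] [Module R N] [Module.Finite R N]
    (f : M →ₗ[R] N) :
    (IsIrreducibleHom f ↔
      ∀ (X : Type u) [AddCommGroup X] [Module R X], Module.Finite R X →
        IsIrreducibleHom (f.prodMap (LinearMap.id (R := R) (M := X)))) ∧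
    (IsIrreducibleHom f ↔
      ∃ (X : Type u) (_ : AddCommGroup X) (_ : Module R X), Module.Finite R X ∧
        IsIrreducibleHom (f.prodMap (LinearMap.id (R := R) (M := X)))) := by
  constructor
  · constructor
    · intro hf X _ _ hX
      exact hf.prodMap_id f X hX
    · intro hall
      exact IsIrreducibleHom.of_prodMap_id f PUnit.{u+1} inferInstance
        (hall PUnit.{u+1} inferInstance)
  · constructor
    · intro hf
      exact ⟨PUnit.{u+1}, inferInstance, inferInstance, inferInstance,
        hf.prodMap_id f PUnit.{u+1} inferInstance⟩
    · rintro ⟨X, _, _, hX, hF⟩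
      exact IsIrreducibleHom.of_prodMap_id f X hX hF
end

section
/- Let (R, m, k) be a commutative noetherian local ring, let f : M → N be a homomorphism of finitely generated R-modules, and let n be a positive integer. If the direct sum map f^{⊕n} : M^{⊕n} → N^{⊕n} (applying f coordinatewise) is irreducible, then n = 1. -/
universe u

/-- If `f : M → N` is a homomorphism of finitely generated modules over a commutative
noetherian local ring and `n` is a positive integer such that the coordinatewise map
`f^{⊕n} : M^{⊕n} → N^{⊕n}` is irreducible, then `n = 1`. -/
theorem eq_one_of_pow_irreducible
    {R : Type u} [CommRing R] [IsNoetherianRing R] [IsLocalRing R]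
    {M N : Type u} [AddCommGroup M] [Module R M] [Module.Finite R M]
    [AddCommGroup N] [Module R N] [Module.Finite R N]
    (f : M →ₗ[R] N) (n : ℕ) (hn : 0 < n)
    (hirr : IsIrreducibleHom
      (LinearMap.pi (fun i : Fin n => f ∘ₗ LinearMap.proj i) :
        (Fin n → M) →ₗ[R] (Fin n → N))) :
    n = 1 := by
  by_contra hne
  have hn2 : 2 ≤ n := by omega
  set F : (Fin n → M) →ₗ[R] (Fin n → N) :=
    (LinearMap.pi (fun i : Fin n => f ∘ₗ LinearMap.proj i)) with hF
  obtain ⟨h1, h2, h3⟩ := hirr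
  set i0 : Fin n := ⟨0, by omega⟩ with hi0
  set i1 : Fin n := ⟨1, by omega⟩ with hi1
  have h10 : i1 ≠ i0 := by simp [hi0, hi1, Fin.ext_iff]
  -- the intermediate module
  set g : (Fin n → M) →ₗ[R] (M × (Fin n → N)) :=
    LinearMap.prod (LinearMap.proj i0) F with hg
  set h : (M × (Fin n → N)) →ₗ[R] (Fin n → N) :=
    LinearMap.pi (fun i : Fin n =>
      if i = i0 then f ∘ₗ LinearMap.fst R M (Fin n → N)
      else (LinearMap.proj i) ∘ₗ LinearMap.snd R M (Fin n → N)) with hh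
  have hgval : ∀ x, g x = (x i0, fun i => f (x i)) := fun x => rfl
  have hhval : ∀ (m : M) (y : Fin n → N) (i : Fin n),
      h (m, y) i = if i = i0 then f m else y i := by
    intro m y i
    show (if i = i0 then f ∘ₗ LinearMap.fst R M (Fin n → N)
      else (LinearMap.proj i) ∘ₗ LinearMap.snd R M (Fin n → N)) (m, y)
        = if i = i0 then f m else y i
    by_cases hi : i = i0
    · rw [if_pos hi, if_pos hi]; rfl
    · rw [if_neg hi, if_neg hi]; rfl
  have hcomp : h ∘ₗ g = F := by
    apply LinearMap.ext
    intro x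
    funext i
    rw [LinearMap.comp_apply, hgval, hhval]
    by_cases hi : i = i0
    · rw [if_pos hi, hi]; rfl
    · rw [if_neg hi]; rfl
  rcases h3 (M × (Fin n → N)) (Module.Finite.prod) g h hcomp with ⟨r, hr⟩ | ⟨s, hs⟩
  · -- g split mono ⇒ f split mono ⇒ F split mono
    set e : N →ₗ[R] (M × (Fin n → N)) := LinearMap.prod (0 : N →ₗ[R] M)
      (LinearMap.pi (fun i => if i = i1 then LinearMap.id else (0 : N →ₗ[R] N))) with he
    have heval : ∀ y : N, e y = ((0 : M), Pi.single i1 y) := by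
      intro y
      refine Prod.ext rfl ?_
      funext i
      show (if i = i1 then LinearMap.id else (0 : N →ₗ[R] N)) y = (Pi.single i1 y : Fin n → N) i
      by_cases hi : i = i1
      · rw [if_pos hi, hi, Pi.single_eq_same]; rfl
      · rw [if_neg hi, Pi.single_eq_of_ne hi]; rfl
    set t : N →ₗ[R] M := (LinearMap.proj i1) ∘ₗ r ∘ₗ e with ht
    have htf : ∀ m : M, t (f m) = m := by
      intro m
      have key := congrFun (congrArg DFunLike.coe hr) (Pi.single i1 m)
      simp only [LinearMap.comp_apply, LinearMap.id_apply] at key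
      have hgs : g (Pi.single i1 m) = ((0 : M), Pi.single i1 (f m)) := by
        rw [hgval]
        refine Prod.ext (Pi.single_eq_of_ne (Ne.symm h10) m) ?_
        funext i
        show f ((Pi.single i1 m : Fin n → M) i) = (Pi.single i1 (f m) : Fin n → N) i
        by_cases hi : i = i1
        · rw [hi, Pi.single_eq_same, Pi.single_eq_same]
        · rw [Pi.single_eq_of_ne hi, Pi.single_eq_of_ne hi, map_zero]
      have step : t (f m) = r (g (Pi.single i1 m)) i1 := by
        rw [ht, LinearMap.comp_apply, LinearMap.comp_apply, heval, hgs,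
          LinearMap.proj_apply]
      rw [step, key, Pi.single_eq_same]
    exact h1 ⟨LinearMap.pi (fun i => t ∘ₗ LinearMap.proj i), by
      apply LinearMap.ext; intro x; funext i
      show t (f (x i)) = x i
      exact htf (x i)⟩
  · -- h split epi ⇒ f split epi ⇒ F split epi
    set e' : N →ₗ[R] (Fin n → N) :=
      LinearMap.pi (fun i => if i = i0 then LinearMap.id else (0 : N →ₗ[R] N)) with he'
    have he'val : ∀ y : N, e' y = Pi.single i0 y := by
      intro y
      funext i
      show (if i = i0 then LinearMap.id else (0 : N →ₗ[R] N)) y = (Pi.single i0 y : Fin n → N) i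
      by_cases hi : i = i0
      · rw [if_pos hi, hi, Pi.single_eq_same]; rfl
      · rw [if_neg hi, Pi.single_eq_of_ne hi]; rfl
    set t : N →ₗ[R] M := (LinearMap.fst R M (Fin n → N)) ∘ₗ s ∘ₗ e' with ht
    have hft : ∀ y : N, f (t y) = y := by
      intro y
      have key := congrFun (congrArg DFunLike.coe hs) (Pi.single i0 y)
      simp only [LinearMap.comp_apply, LinearMap.id_apply] at key
      have key0 : h (s (Pi.single i0 y)) i0 = y := by
        rw [key, Pi.single_eq_same]
      have step : h (s (Pi.single i0 y)) i0 = f ((s (Pi.single i0 y)).1) := by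
        obtain ⟨a, b⟩ := s (Pi.single i0 y)
        rw [hhval, if_pos rfl]
      rw [step] at key0
      rw [ht, LinearMap.comp_apply, LinearMap.comp_apply, he'val, LinearMap.fst_apply]
      exact key0
    exact h2 ⟨LinearMap.pi (fun i => t ∘ₗ LinearMap.proj i), by
      apply LinearMap.ext; intro y; funext i
      show f (t (y i)) = y i
      exact hft (y i)⟩
end

section
/- Let (R, m, k) be a commutative noetherian local ring, let M be a finitely generated R-module, let m ≥ 0 be an integer, and let φ : M → R^{⊕m} be a monomorphism. Then there exist an integer n with 0 ≤ n ≤ m, a finitely generated R-module N, and a monomorphism g : N → R^{⊕n} with image contained in m·R^{⊕n}, such that φ is equivalent to the homomorphism g ⊕ id : N ⊕ R^{⊕(m−n)} → R^{⊕n} ⊕ R^{⊕(m−n)}. Moreover, in this situation φ is irreducible if and only if g ⊕ id is irreducible, if and only if g is irreducible. -/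
universe u

section LEquivDef
variable {R : Type u} [CommRing R]

/-- Two linear maps are equivalent if they agree up to isomorphisms of source and target. -/
def LEquivMap {A B A' B' : Type u} [AddCommGroup A] [Module R A] [AddCommGroup B] [Module R B]
    [AddCommGroup A'] [Module R A'] [AddCommGroup B'] [Module R B']
    (f : A →ₗ[R] B) (f' : A' →ₗ[R] B') : Prop :=
  ∃ (p : A ≃ₗ[R] A') (q : B ≃ₗ[R] B'), f' ∘ₗ (p : A →ₗ[R] A') = (q : B →ₗ[R] B') ∘ₗ f

variable {A B A' B' A'' B'' C D C' D' : Type u}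
  [AddCommGroup A] [Module R A] [AddCommGroup B] [Module R B]
  [AddCommGroup A'] [Module R A'] [AddCommGroup B'] [Module R B']
  [AddCommGroup A''] [Module R A''] [AddCommGroup B''] [Module R B'']
  [AddCommGroup C] [Module R C] [AddCommGroup D] [Module R D]
  [AddCommGroup C'] [Module R C'] [AddCommGroup D'] [Module R D']

lemma LEquivMap.refl (f : A →ₗ[R] B) : LEquivMap f f :=
  ⟨LinearEquiv.refl R A, LinearEquiv.refl R B, rfl⟩

lemma LEquivMap.apply {f : A →ₗ[R] B} {f' : A' →ₗ[R] B'} (p : A ≃ₗ[R] A') (q : B ≃ₗ[R] B')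
    (h : ∀ x, f' (p x) = q (f x)) : LEquivMap f f' :=
  ⟨p, q, LinearMap.ext h⟩

lemma LEquivMap.symm {f : A →ₗ[R] B} {f' : A' →ₗ[R] B'} (h : LEquivMap f f') : LEquivMap f' f := by
  obtain ⟨p, q, hpq⟩ := h
  refine LEquivMap.apply p.symm q.symm fun x => ?_
  have := LinearMap.congr_fun hpq (p.symm x)
  simp only [LinearMap.comp_apply, LinearEquiv.coe_coe, LinearEquiv.apply_symm_apply] at this
  rw [this, LinearEquiv.symm_apply_apply]

lemma LEquivMap.trans {f : A →ₗ[R] B} {f' : A' →ₗ[R] B'} {f'' : A'' →ₗ[R] B''}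
    (h1 : LEquivMap f f') (h2 : LEquivMap f' f'') : LEquivMap f f'' := by
  obtain ⟨p1, q1, h1⟩ := h1
  obtain ⟨p2, q2, h2⟩ := h2
  refine LEquivMap.apply (p1.trans p2) (q1.trans q2) fun x => ?_
  have e1 := LinearMap.congr_fun h1 x
  have e2 := LinearMap.congr_fun h2 (p1 x)
  simp only [LinearMap.comp_apply, LinearEquiv.coe_coe] at e1 e2 ⊢
  simp [LinearEquiv.trans_apply, e2, e1]

lemma LEquivMap.prodMap {f : A →ₗ[R] B} {f' : A' →ₗ[R] B'} {h : C →ₗ[R] D} {h' : C' →ₗ[R] D'}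
    (hf : LEquivMap f f') (hh : LEquivMap h h') :
    LEquivMap (f.prodMap h) (f'.prodMap h') := by
  obtain ⟨p1, q1, e1⟩ := hf
  obtain ⟨p2, q2, e2⟩ := hh
  refine LEquivMap.apply (p1.prodCongr p2) (q1.prodCongr q2) fun x => ?_
  have e1 := LinearMap.congr_fun e1 x.1
  have e2 := LinearMap.congr_fun e2 x.2
  simp only [LinearMap.comp_apply, LinearEquiv.coe_coe] at e1 e2
  simp [LinearEquiv.prodCongr_apply, e1, e2]

lemma LEquivMap.id_id (e : C ≃ₗ[R] C') :
    LEquivMap (LinearMap.id (R := R) (M := C)) (LinearMap.id (R := R) (M := C')) :=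
  LEquivMap.apply e e fun _ => rfl

/-- reassociation: `(f ⊕ id_C) ⊕ id_D` is equivalent to `f ⊕ id_{C'}` whenever `C × D ≃ C'`. -/
lemma LEquivMap.assoc (f : A →ₗ[R] B) (e : (C × D) ≃ₗ[R] C') :
    LEquivMap (((f.prodMap (LinearMap.id (R := R) (M := C))).prodMap
        (LinearMap.id (R := R) (M := D))))
      (f.prodMap (LinearMap.id (R := R) (M := C'))) := by
  refine LEquivMap.apply
    ((LinearEquiv.prodAssoc R A C D).trans ((LinearEquiv.refl R A).prodCongr e))
    ((LinearEquiv.prodAssoc R B C D).trans ((LinearEquiv.refl R B).prodCongr e)) fun x => ?_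
  rfl

end LEquivDef

lemma mem_smul_top_pi {R : Type u} [CommRing R] {n : ℕ} (I : Ideal R) (x : Fin n → R) :
    x ∈ I • (⊤ : Submodule R (Fin n → R)) ↔ ∀ i, x i ∈ I := by
  constructor
  · intro hx
    refine Submodule.smul_induction_on hx (fun r hr m _ i => ?_) (fun a b ha hb i => ?_)
    · exact I.mul_mem_right _ hr
    · exact I.add_mem (ha i) (hb i)
  · intro hx
    have : x = ∑ i : Fin n, x i • fun j => if i = j then (1 : R) else 0 := pi_eq_sum_univ x
    rw [this]
    exact Submodule.sum_mem _ fun i _ =>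
      Submodule.smul_mem_smul (hx i) Submodule.mem_top

section Congr
variable {R : Type u} [CommRing R] {M N M' N' : Type u}
  [AddCommGroup M] [Module R M] [AddCommGroup N] [Module R N]
  [AddCommGroup M'] [Module R M'] [AddCommGroup N'] [Module R N']

lemma isIrreducibleHom_of_congr (f : M →ₗ[R] N) (f' : M' →ₗ[R] N')
    (p : M ≃ₗ[R] M') (q : N ≃ₗ[R] N')
    (hc : ∀ x, f' (p x) = q (f x)) (hf : IsIrreducibleHom f) : IsIrreducibleHom f' := by
  obtain ⟨h1, h2, h3⟩ := hf
  refine ⟨?_, ?_, ?_⟩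
  · rintro ⟨r', hr'⟩
    refine h1 ⟨p.symm.toLinearMap ∘ₗ r' ∘ₗ q.toLinearMap, LinearMap.ext fun x => ?_⟩
    have h0 := LinearMap.congr_fun hr' (p x)
    simp only [LinearMap.comp_apply, LinearEquiv.coe_coe, LinearMap.id_apply] at h0 ⊢
    rw [show (q : N → N') (f x) = f' (p x) from (hc x).symm, h0, p.symm_apply_apply]
  · rintro ⟨s', hs'⟩
    refine h2 ⟨p.symm.toLinearMap ∘ₗ s' ∘ₗ q.toLinearMap, LinearMap.ext fun y => ?_⟩
    have h0 := LinearMap.congr_fun hs' (q y)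
    simp only [LinearMap.comp_apply, LinearEquiv.coe_coe, LinearMap.id_apply] at h0 ⊢
    have h4 := hc (p.symm (s' (q y)))
    rw [p.apply_symm_apply, h0] at h4
    exact q.injective h4.symm
  · intro L _ _ hL g h hgh
    have key : (q.symm.toLinearMap ∘ₗ h) ∘ₗ (g ∘ₗ p.toLinearMap) = f := by
      refine LinearMap.ext fun x => ?_
      have h0 := LinearMap.congr_fun hgh (p x)
      simp only [LinearMap.comp_apply, LinearEquiv.coe_coe] at h0 ⊢
      rw [h0, hc x, q.symm_apply_apply]
    rcases h3 L hL (g ∘ₗ p.toLinearMap) (q.symm.toLinearMap ∘ₗ h) key with hr | hs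
    · obtain ⟨r, hr⟩ := hr
      refine Or.inl ⟨p.toLinearMap ∘ₗ r, LinearMap.ext fun y => ?_⟩
      have h0 := LinearMap.congr_fun hr (p.symm y)
      simp only [LinearMap.comp_apply, LinearEquiv.coe_coe, LinearMap.id_apply,
        p.apply_symm_apply] at h0 ⊢
      rw [h0, p.apply_symm_apply]
    · obtain ⟨s, hs⟩ := hs
      refine Or.inr ⟨s ∘ₗ q.symm.toLinearMap, LinearMap.ext fun y => ?_⟩
      have h0 := LinearMap.congr_fun hs (q.symm y)
      simp only [LinearMap.comp_apply, LinearEquiv.coe_coe, LinearMap.id_apply] at h0 ⊢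
      exact q.symm.injective h0

lemma isIrreducibleHom_congr (f : M →ₗ[R] N) (f' : M' →ₗ[R] N')
    (p : M ≃ₗ[R] M') (q : N ≃ₗ[R] N')
    (hc : ∀ x, f' (p x) = q (f x)) : IsIrreducibleHom f ↔ IsIrreducibleHom f' := by
  constructor
  · exact isIrreducibleHom_of_congr f f' p q hc
  · refine isIrreducibleHom_of_congr f' f p.symm q.symm fun x => ?_
    have := hc (p.symm x)
    rw [p.apply_symm_apply] at this
    rw [this, q.symm_apply_apply]

end Congr

section ProdId
variable {R : Type u} [CommRing R] [IsNoetherianRing R] {M N F : Type u}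
  [AddCommGroup M] [Module R M] [AddCommGroup N] [Module R N]
  [AddCommGroup F] [Module R F] [Module.Finite R F]

lemma isIrreducibleHom_prodMap_id (f : M →ₗ[R] N) :
    IsIrreducibleHom (f.prodMap (LinearMap.id (R := R) (M := F))) ↔ IsIrreducibleHom f := by
  constructor
  · rintro ⟨h1, h2, h3⟩
    refine ⟨?_, ?_, ?_⟩
    · rintro ⟨r, hr⟩
      refine h1 ⟨r.prodMap LinearMap.id, LinearMap.ext fun z => ?_⟩
      have := LinearMap.congr_fun hr z.1
      simp only [LinearMap.comp_apply, LinearMap.prodMap_apply, LinearMap.id_apply,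
        LinearMap.id_coe, id_eq] at this ⊢
      exact Prod.ext this rfl
    · rintro ⟨s, hs⟩
      refine h2 ⟨s.prodMap LinearMap.id, LinearMap.ext fun z => ?_⟩
      have := LinearMap.congr_fun hs z.1
      simp only [LinearMap.comp_apply, LinearMap.prodMap_apply, LinearMap.id_apply,
        LinearMap.id_coe, id_eq] at this ⊢
      exact Prod.ext this rfl
    · intro L _ _ hL g h hgh
      haveI := hL
      have key : (h.prodMap (LinearMap.id (R := R) (M := F))) ∘ₗ
          (g.prodMap (LinearMap.id (R := R) (M := F))) = f.prodMap LinearMap.id := by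
        refine LinearMap.ext fun z => ?_
        have := LinearMap.congr_fun hgh z.1
        simp only [LinearMap.comp_apply, LinearMap.prodMap_apply, LinearMap.id_apply] at this ⊢
        exact Prod.ext this rfl
      rcases h3 (L × F) inferInstance (g.prodMap LinearMap.id) (h.prodMap LinearMap.id) key
        with ⟨r, hr⟩ | ⟨s, hs⟩
      · refine Or.inl ⟨(LinearMap.fst R M F) ∘ₗ r ∘ₗ (LinearMap.inl R L F),
          LinearMap.ext fun x => ?_⟩
        have := LinearMap.congr_fun hr (x, 0)
        simp only [LinearMap.comp_apply, LinearMap.prodMap_apply, LinearMap.id_apply,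
          LinearMap.inl_apply, LinearMap.fst_apply, map_zero] at this ⊢
        rw [this]
      · refine Or.inr ⟨(LinearMap.fst R L F) ∘ₗ s ∘ₗ (LinearMap.inl R N F),
          LinearMap.ext fun x => ?_⟩
        have := LinearMap.congr_fun hs (x, 0)
        simp only [LinearMap.comp_apply, LinearMap.prodMap_apply, LinearMap.id_apply,
          LinearMap.inl_apply, LinearMap.fst_apply] at this ⊢
        exact congrArg Prod.fst this
  · rintro ⟨h1, h2, h3⟩
    refine ⟨?_, ?_, ?_⟩
    · rintro ⟨r, hr⟩
      refine h1 ⟨(LinearMap.fst R M F) ∘ₗ r ∘ₗ (LinearMap.inl R N F),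
        LinearMap.ext fun x => ?_⟩
      have := LinearMap.congr_fun hr (x, 0)
      simp only [LinearMap.comp_apply, LinearMap.prodMap_apply, LinearMap.id_apply,
        LinearMap.inl_apply, LinearMap.fst_apply, map_zero] at this ⊢
      rw [this]
    · rintro ⟨s, hs⟩
      refine h2 ⟨(LinearMap.fst R M F) ∘ₗ s ∘ₗ (LinearMap.inl R N F),
        LinearMap.ext fun x => ?_⟩
      have := LinearMap.congr_fun hs (x, 0)
      simp only [LinearMap.comp_apply, LinearMap.prodMap_apply, LinearMap.id_apply,
        LinearMap.inl_apply, LinearMap.fst_apply] at this ⊢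
      exact congrArg Prod.fst this
    · intro L _ _ hL g h hgh
      haveI := hL
      set u : M →ₗ[R] L := g ∘ₗ LinearMap.inl R M F with hu
      set v : F →ₗ[R] L := g ∘ₗ LinearMap.inr R M F with hv
      set hN : L →ₗ[R] N := (LinearMap.fst R N F) ∘ₗ h with hhN
      set hF : L →ₗ[R] F := (LinearMap.snd R N F) ∘ₗ h with hhF
      have hg : ∀ z : M × F, h (g z) = (f z.1, z.2) := fun z => by
        have := LinearMap.congr_fun hgh z
        simpa only [LinearMap.comp_apply, LinearMap.prodMap_apply, LinearMap.id_apply] using this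
      have fact1 : ∀ x : M, h (u x) = (f x, 0) := fun x => by
        simpa [hu] using hg (x, 0)
      have fact2 : ∀ y : F, h (v y) = (0, y) := fun y => by
        simpa [hv] using hg (0, y)
      have hFu : ∀ x : M, hF (u x) = 0 := fun x => by
        simp only [hhF, LinearMap.comp_apply, LinearMap.snd_apply, fact1]
      have hFv : ∀ y : F, hF (v y) = y := fun y => by
        simp only [hhF, LinearMap.comp_apply, LinearMap.snd_apply, fact2]
      set L' : Submodule R L := LinearMap.ker hF with hL'
      have u'mem : ∀ x : M, u x ∈ L' := fun x => by
        simp only [hL', LinearMap.mem_ker]; exact hFu x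
      set u' : M →ₗ[R] ↥L' := LinearMap.codRestrict L' u u'mem with hu'
      set h1' : ↥L' →ₗ[R] N := hN ∘ₗ L'.subtype with hh1'
      have hfact : h1' ∘ₗ u' = f := by
        refine LinearMap.ext fun x => ?_
        simp only [hh1', hu', LinearMap.comp_apply, LinearMap.codRestrict_apply,
          Submodule.coe_subtype, hhN, LinearMap.fst_apply, fact1]
      rcases h3 ↥L' inferInstance u' h1' hfact with ⟨r, hr⟩ | ⟨s, hs⟩
      · have πmem : ∀ z : L, z - v (hF z) ∈ L' := fun z => by
          simp only [hL', LinearMap.mem_ker, map_sub, hFv, sub_self]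
        set π : L →ₗ[R] ↥L' :=
          LinearMap.codRestrict L' (LinearMap.id - v ∘ₗ hF) (fun z => by
            simpa using πmem z) with hπ
        refine Or.inl ⟨(r ∘ₗ π).prod hF, LinearMap.ext fun z => ?_⟩
        have hgz : g z = u z.1 + v z.2 := by
          have : z = (z.1, 0) + (0, z.2) := by simp
          rw [this, map_add]
          simp [hu, hv]
        have eπ : ∀ w : L, ((π w : L)) = w - v (hF w) := fun w => by
          simp only [hπ, LinearMap.codRestrict_apply, LinearMap.sub_apply, LinearMap.id_apply,
            LinearMap.comp_apply]
        have hπg : π (g z) = u' z.1 := by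
          apply Subtype.ext
          rw [show ((u' z.1 : L)) = u z.1 from rfl, eπ, hgz, map_add, hFu, hFv, zero_add]
          abel
        have hFgz : hF (g z) = z.2 := by
          rw [hgz, map_add, hFu, hFv, zero_add]
        have hru : r (u' z.1) = z.1 := by
          have := LinearMap.congr_fun hr z.1
          simpa using this
        simp only [LinearMap.comp_apply, LinearMap.prod_apply, Function.prod, LinearMap.id_apply]
        rw [hπg, hru, hFgz]
      · refine Or.inr ⟨(L'.subtype ∘ₗ s) ∘ₗ (LinearMap.fst R N F) + v ∘ₗ (LinearMap.snd R N F),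
          LinearMap.ext fun z => ?_⟩
        have hs1 : hN ((s z.1 : L)) = z.1 := by
          have := LinearMap.congr_fun hs z.1
          simpa [hh1'] using this
        have hs2 : hF ((s z.1 : L)) = 0 := (s z.1).2
        simp only [LinearMap.comp_apply, LinearMap.add_apply, LinearMap.fst_apply,
          LinearMap.snd_apply, Submodule.coe_subtype, map_add, LinearMap.id_apply]
        have hNv : ∀ y : F, hN (v y) = 0 := fun y => by
          simp only [hhN, LinearMap.comp_apply, LinearMap.fst_apply, fact2]
        have hdecomp : ∀ w : L, h w = (hN w, hF w) := fun w => rfl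
        rw [hdecomp ((s z.1 : L)), hdecomp (v z.2), hs1, hs2, hNv, hFv, Prod.mk_add_mk,
          add_zero, zero_add]

end ProdId

section Equivs
variable {R : Type u} [CommRing R]

/-- `R^a × R ≃ R^(a+1)`. -/
noncomputable def piSnocEquiv (a : ℕ) : ((Fin a → R) × R) ≃ₗ[R] (Fin (a + 1) → R) :=
  (LinearEquiv.ofBijective
    ((LinearMap.funLeft R R (Fin.castSucc)).prod (LinearMap.proj (Fin.last a)))
    ⟨by
      intro x y hxy
      have h1 : ∀ j : Fin a, x (Fin.castSucc j) = y (Fin.castSucc j) := fun j =>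
        congrFun (congrArg Prod.fst hxy) j
      have h2 : x (Fin.last a) = y (Fin.last a) := congrArg Prod.snd hxy
      funext j
      exact Fin.lastCases h2 h1 j,
     by
      rintro ⟨x, r⟩
      refine ⟨Fin.snoc x r, ?_⟩
      refine Prod.ext (funext fun j => ?_) ?_
      · simp
      · simp⟩).symm

/-- The kernel of the `i₀`-th coordinate projection is `R^m`. -/
noncomputable def kerProjEquiv (m : ℕ) (i₀ : Fin (m + 1)) (lam : (Fin (m + 1) → R) →ₗ[R] R)
    (hlam : ∀ x, lam x = 0 ↔ x i₀ = 0) :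
    ↥(LinearMap.ker lam) ≃ₗ[R] (Fin m → R) :=
  LinearEquiv.ofBijective
    ((LinearMap.funLeft R R i₀.succAbove) ∘ₗ (LinearMap.ker lam).subtype)
    ⟨by
      rintro ⟨x, hx⟩ ⟨y, hy⟩ hxy
      rw [LinearMap.mem_ker, hlam] at hx hy
      apply Subtype.ext
      funext j
      exact (Fin.forall_iff_succAbove i₀ (P := fun j => x j = y j)).2
        ⟨hx.trans hy.symm, fun i => congrFun hxy i⟩ j,
     by
      intro y
      refine ⟨⟨i₀.insertNth 0 y, ?_⟩, ?_⟩
      · rw [LinearMap.mem_ker, hlam]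
        exact @Fin.insertNth_apply_same m (fun _ => R) i₀ 0 y
      · funext j
        exact @Fin.insertNth_apply_succAbove m (fun _ => R) i₀ 0 y j⟩

/-- Splitting off a free rank-one summand given a functional taking value 1. -/
noncomputable def splitByFunctional {M : Type u} [AddCommGroup M] [Module R M]
    (ψ : M →ₗ[R] R) (v : M) (hv : ψ v = 1) : M ≃ₗ[R] ↥(LinearMap.ker ψ) × R := by
  refine LinearEquiv.ofLinear
    ((LinearMap.codRestrict (LinearMap.ker ψ) (LinearMap.id - ψ.smulRight v)
      (fun w => by
        simp only [LinearMap.mem_ker, map_sub, LinearMap.sub_apply, LinearMap.id_apply,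
          LinearMap.smulRight_apply, map_smul, smul_eq_mul, hv, mul_one, sub_self])).prod ψ)
    ((LinearMap.ker ψ).subtype ∘ₗ LinearMap.fst R _ R + (LinearMap.snd R _ R).smulRight v)
    ?_ ?_
  · refine LinearMap.ext fun z => ?_
    obtain ⟨⟨x, hx⟩, r⟩ := z
    rw [LinearMap.mem_ker] at hx
    refine Prod.ext (Subtype.ext ?_) ?_ <;>
      simp [hx, hv]
    erw [LinearMap.codRestrict_apply, LinearMap.codRestrict_apply]
    simp [hx, hv]
  · refine LinearMap.ext fun w => ?_
    simp
    erw [LinearMap.codRestrict_apply]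
    simp

@[simp] lemma splitByFunctional_apply_fst {M : Type u} [AddCommGroup M] [Module R M]
    (ψ : M →ₗ[R] R) (v : M) (hv : ψ v = 1) (w : M) :
    (((splitByFunctional ψ v hv) w).1 : M) = w - ψ w • v := rfl

@[simp] lemma splitByFunctional_apply_snd {M : Type u} [AddCommGroup M] [Module R M]
    (ψ : M →ₗ[R] R) (v : M) (hv : ψ v = 1) (w : M) :
    ((splitByFunctional ψ v hv) w).2 = ψ w := rfl

/-- Product with a trivial module. -/
noncomputable def prodTrivialEquiv (A Z : Type u) [AddCommGroup A] [Module R A] [AddCommGroup Z]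
    [Module R Z] [Subsingleton Z] : A ≃ₗ[R] A × Z :=
  LinearEquiv.ofLinear (LinearMap.prod LinearMap.id 0) (LinearMap.fst R A Z)
    (LinearMap.ext fun _ => Prod.ext rfl (Subsingleton.elim _ _)) (LinearMap.ext fun _ => rfl)

end Equivs

lemma key_step {R : Type u} [CommRing R] [IsNoetherianRing R] [IsLocalRing R] (m : ℕ) :
    ∀ (M : Type u) [AddCommGroup M] [Module R M], ∀ [Module.Finite R M],
    ∀ (φ : M →ₗ[R] (Fin m → R)), Function.Injective φ →
    ∃ (n : ℕ), n ≤ m ∧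
      ∃ (N : Type u) (_ : AddCommGroup N) (_ : Module R N), Module.Finite R N ∧
        ∃ g : N →ₗ[R] (Fin n → R),
          Function.Injective g ∧
          LinearMap.range g ≤ (IsLocalRing.maximalIdeal R) • (⊤ : Submodule R (Fin n → R)) ∧
          LEquivMap φ (g.prodMap (LinearMap.id (R := R) (M := Fin (m - n) → R))) := by
  induction m with
  | zero =>
    intro M _ _ _ φ hφ
    refine ⟨0, le_rfl, M, inferInstance, inferInstance, inferInstance, φ, hφ, ?_, ?_⟩
    · intro x hx
      have : x = 0 := Subsingleton.elim _ _
      rw [this]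
      exact Submodule.zero_mem _
    · haveI : Subsingleton (Fin (0 - 0) → R) :=
        ⟨fun f g => funext fun i => absurd i.2 (by omega)⟩
      exact LEquivMap.apply (prodTrivialEquiv M (Fin (0 - 0) → R))
        (prodTrivialEquiv (Fin 0 → R) (Fin (0 - 0) → R))
        (fun x => Prod.ext rfl (Subsingleton.elim _ _))
  | succ m ih =>
    intro M _ _ _ φ hφ
    by_cases hr : LinearMap.range φ ≤
        (IsLocalRing.maximalIdeal R) • (⊤ : Submodule R (Fin (m + 1) → R))
    · refine ⟨m + 1, le_rfl, M, inferInstance, inferInstance, inferInstance, φ, hφ, hr, ?_⟩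
      haveI : IsEmpty (Fin (m + 1 - (m + 1))) := by rw [Nat.sub_self]; infer_instance
      haveI : Subsingleton (Fin (m + 1 - (m + 1)) → R) :=
        ⟨fun f g => funext fun i => (IsEmpty.false i).elim⟩
      exact LEquivMap.apply (prodTrivialEquiv M (Fin (m + 1 - (m + 1)) → R))
        (prodTrivialEquiv (Fin (m + 1) → R) (Fin (m + 1 - (m + 1)) → R))
        (fun x => Prod.ext rfl (Subsingleton.elim _ _))
    · obtain ⟨x, hx, hxnot⟩ := SetLike.not_le_iff_exists.mp hr
      obtain ⟨v, rfl⟩ := hx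
      rw [mem_smul_top_pi] at hxnot
      push_neg at hxnot
      obtain ⟨i₀, hi₀⟩ := hxnot
      have hunit : IsUnit (φ v i₀) := by
        by_contra h
        exact hi₀ ((IsLocalRing.mem_maximalIdeal _).2 (mem_nonunits_iff.2 h))
      obtain ⟨u, hu⟩ := hunit
      set lam : (Fin (m + 1) → R) →ₗ[R] R := (↑u⁻¹ : R) • LinearMap.proj i₀ with hlamdef
      have hlamapp : ∀ x : Fin (m + 1) → R, lam x = (↑u⁻¹ : R) * x i₀ := fun x => rfl
      have hlamv : lam (φ v) = 1 := by rw [hlamapp, ← hu]; exact u.inv_mul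
      have hlamzero : ∀ x : Fin (m + 1) → R, lam x = 0 ↔ x i₀ = 0 := by
        intro x
        rw [hlamapp]
        constructor
        · intro h
          have : (↑u : R) * ((↑u⁻¹ : R) * x i₀) = 0 := by rw [h, mul_zero]
          rwa [← mul_assoc, u.mul_inv, one_mul] at this
        · intro h; rw [h, mul_zero]
      set ψ : M →ₗ[R] R := lam ∘ₗ φ with hψdef
      have hψv : ψ v = 1 := hlamv
      set K' := LinearMap.ker ψ with hK'
      set Kf := LinearMap.ker lam with hKf
      set eM := splitByFunctional ψ v hψv with heM
      set eF := splitByFunctional lam (φ v) hlamv with heF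
      have hmap : ∀ w : M, w ∈ K' → φ w ∈ Kf := fun w hw => by
        rw [hKf, LinearMap.mem_ker]
        rw [hK', LinearMap.mem_ker, hψdef] at hw
        exact hw
      set φ' : ↥K' →ₗ[R] ↥Kf :=
        LinearMap.codRestrict Kf (φ ∘ₗ K'.subtype) (fun w => hmap ↑w w.2) with hφ'def
      have hφ'inj : Function.Injective φ' := by
        intro a b hab
        apply Subtype.ext
        apply hφ
        have := congrArg (Subtype.val) hab
        exact this
      have hstep : LEquivMap φ (φ'.prodMap (LinearMap.id (R := R) (M := R))) := by
        refine LEquivMap.apply eM eF fun w => ?_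
        refine Prod.ext (Subtype.ext ?_) ?_
        · show (φ' ((eM w).1) : Fin (m + 1) → R) = ((eF (φ w)).1 : Fin (m + 1) → R)
          rw [show (φ' ((eM w).1) : Fin (m + 1) → R) = φ ((eM w).1 : M) from rfl]
          rw [heM, heF, splitByFunctional_apply_fst, splitByFunctional_apply_fst,
            map_sub, map_smul]
          rfl
        · show (eM w).2 = (eF (φ w)).2
          rw [heM, heF, splitByFunctional_apply_snd, splitByFunctional_apply_snd]
          rfl
      set eK := kerProjEquiv m i₀ lam hlamzero with heK
      set φ'' : ↥K' →ₗ[R] (Fin m → R) := eK.toLinearMap ∘ₗ φ' with hφ''def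
      have hφ''inj : Function.Injective φ'' := by
        intro a b hab
        apply hφ'inj
        apply eK.injective
        simpa [hφ''def] using hab
      obtain ⟨n, hn, N, instN1, instN2, hNfin, g, hginj, hgrange, hLE⟩ := ih ↥K' φ'' hφ''inj
      refine ⟨n, by omega, N, instN1, instN2, hNfin, g, hginj, hgrange, ?_⟩
      have h2 : LEquivMap φ' φ'' :=
        LEquivMap.apply (LinearEquiv.refl R ↥K') eK (fun x => rfl)
      have h4 : LEquivMap (φ'.prodMap (LinearMap.id (R := R) (M := R)))
          ((g.prodMap (LinearMap.id (R := R) (M := Fin (m - n) → R))).prodMap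
            (LinearMap.id (R := R) (M := R))) :=
        LEquivMap.prodMap (h2.trans hLE) (LEquivMap.refl _)
      have E : ((Fin (m - n) → R) × R) ≃ₗ[R] (Fin (m + 1 - n) → R) :=
        (piSnocEquiv (m - n)).trans
          (LinearEquiv.funCongrLeft R R (finCongr (show m + 1 - n = m - n + 1 by omega)))
      exact (hstep.trans h4).trans (LEquivMap.assoc g E)

/-- Every monomorphism `φ : M → R^m` over a commutative noetherian local ring `(R, 𝔪)` is
equivalent to a map `g ⊕ id : N ⊕ R^{m-n} → R^n ⊕ R^{m-n}` where `g : N → R^n` is a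
monomorphism with image inside `𝔪·R^n`; moreover `φ` is irreducible iff `g ⊕ id` is
irreducible iff `g` is irreducible. -/
theorem mono_to_free_equivalent_minimal
    {R : Type u} [CommRing R] [IsNoetherianRing R] [IsLocalRing R]
    {M : Type u} [AddCommGroup M] [Module R M] [Module.Finite R M]
    (m : ℕ) (φ : M →ₗ[R] (Fin m → R)) (hφ : Function.Injective φ) :
    ∃ (n : ℕ), n ≤ m ∧
      ∃ (N : Type u) (_ : AddCommGroup N) (_ : Module R N), Module.Finite R N ∧
        ∃ g : N →ₗ[R] (Fin n → R),
          Function.Injective g ∧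
          LinearMap.range g ≤
            (IsLocalRing.maximalIdeal R) • (⊤ : Submodule R (Fin n → R)) ∧
          (∃ (p : M ≃ₗ[R] (N × (Fin (m - n) → R)))
             (q : (Fin m → R) ≃ₗ[R] ((Fin n → R) × (Fin (m - n) → R))),
            (g.prodMap (LinearMap.id (R := R) (M := Fin (m - n) → R))) ∘ₗ p.toLinearMap
              = q.toLinearMap ∘ₗ φ) ∧
          (IsIrreducibleHom φ ↔
            IsIrreducibleHom (g.prodMap (LinearMap.id (R := R) (M := Fin (m - n) → R)))) ∧
          (IsIrreducibleHom φ ↔ IsIrreducibleHom g) := by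
  obtain ⟨n, hn, N, instN1, instN2, hNfin, g, hginj, hgrange, hLE⟩ := key_step m M φ hφ
  obtain ⟨p, q, hpq⟩ := hLE
  have hpoint : ∀ x, (g.prodMap (LinearMap.id (R := R) (M := Fin (m - n) → R))) (p x)
      = q (φ x) := fun x => LinearMap.congr_fun hpq x
  have iff1 : IsIrreducibleHom φ ↔
      IsIrreducibleHom (g.prodMap (LinearMap.id (R := R) (M := Fin (m - n) → R))) :=
    isIrreducibleHom_congr φ _ p q hpoint
  refine ⟨n, hn, N, instN1, instN2, hNfin, g, hginj, hgrange, ⟨p, q, hpq⟩, iff1, ?_⟩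
  exact iff1.trans (isIrreducibleHom_prodMap_id g)
end

section
/- Let (R, xR) be a discrete valuation ring with maximal ideal generated by x, let θ : xR → R be the inclusion map, and let φ : M → F be a monomorphism of finitely generated R-modules with F free such that the image of φ is contained in (xR)·F. Then the following are equivalent: (i) φ is irreducible; (ii) there exist isomorphisms η : M → xR and π : F → R such that θ ∘ η = π ∘ φ. -/
universe u

/-- Nakayama: if every element of a f.g. module over a local ring is `x` times another
element, for `x` in the maximal ideal, then the module is trivial. -/
lemma aux_subsingleton_of_smul_surjective {R : Type u} [CommRing R] [IsLocalRing R]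
    {M : Type u} [AddCommGroup M] [Module R M] [Module.Finite R M] {x : R}
    (hxm : x ∈ IsLocalRing.maximalIdeal R)
    (h : ∀ m : M, ∃ m', x • m' = m) : Subsingleton M := by
  have hle : (⊤ : Submodule R M) ≤ (IsLocalRing.maximalIdeal R) • (⊤ : Submodule R M) := by
    intro m _
    obtain ⟨m', hm'⟩ := h m
    exact hm' ▸ Submodule.smul_mem_smul hxm trivial
  have htop : (⊤ : Submodule R M) = ⊥ :=
    Submodule.eq_bot_of_le_smul_of_le_jacobson_bot (IsLocalRing.maximalIdeal R) ⊤
      Module.Finite.fg_top hle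
      (le_of_eq (IsLocalRing.jacobson_eq_maximalIdeal ⊥ bot_ne_top).symm)
  refine subsingleton_of_forall_eq 0 fun m => ?_
  have hm : m ∈ (⊥ : Submodule R M) := htop ▸ Submodule.mem_top
  simpa using hm

/-- Let `(R, xR)` be a discrete valuation ring with maximal ideal generated by `x`, let
`θ : xR → R` be the inclusion, and let `φ : M → F` be a monomorphism of finitely generated
`R`-modules with `F` free and `Im(φ) ⊆ (xR)F`. Then `φ` is irreducible iff there are
isomorphisms `η : M ≅ xR` and `π : F ≅ R` with `θ ∘ η = π ∘ φ`. -/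
theorem irreducible_mono_iff_equivalent_to_inclusion_of_dvr
    {R : Type u} [CommRing R] [IsDomain R] [IsDiscreteValuationRing R]
    (x : R) (hx : IsLocalRing.maximalIdeal R = Ideal.span {x})
    {M F : Type u} [AddCommGroup M] [Module R M] [Module.Finite R M]
    [AddCommGroup F] [Module R F] [Module.Finite R F] [Module.Free R F]
    (φ : M →ₗ[R] F) (hinj : Function.Injective φ)
    (hrange : LinearMap.range φ ≤ (Ideal.span {x} : Ideal R) • (⊤ : Submodule R F)) :
    IsIrreducibleHom φ ↔
      ∃ (η : M ≃ₗ[R] (Ideal.span {x} : Ideal R)) (π : F ≃ₗ[R] R),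
        ∀ z : M, ((Ideal.span {x} : Ideal R).subtype (η z)) = π (φ z) := by
  classical
  have hx0 : x ≠ 0 := by
    intro h0
    apply IsDiscreteValuationRing.not_a_field R
    rw [hx, h0]
    exact Ideal.span_singleton_eq_bot.mpr rfl
  have hxmem : x ∈ IsLocalRing.maximalIdeal R := by
    rw [hx]; exact Ideal.subset_span (Set.mem_singleton x)
  have hxu : ¬ IsUnit x := by
    have h := hxmem
    rw [IsLocalRing.mem_maximalIdeal] at h
    exact h
  haveI := Module.Free.instIsTorsionFree (R := R) (M := F)
  constructor
  · rintro ⟨hsm, hse, hfac⟩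
    have hMne : ¬ Subsingleton M := by
      intro hM
      exact hsm ⟨0, LinearMap.ext fun m => Subsingleton.elim _ _⟩
    -- write φ = x • ψ
    set lx : F →ₗ[R] F := x • (LinearMap.id : F →ₗ[R] F) with hlx
    have hlxinj : Function.Injective lx := by
      intro a b hab
      simp only [hlx, LinearMap.smul_apply, LinearMap.id_coe, id_eq] at hab
      exact smul_right_injective F hx0 hab
    have hner : ∀ m : M, φ m ∈ LinearMap.range lx := by
      intro m
      have h1 : φ m ∈ (Ideal.span {x} : Ideal R) • (⊤ : Submodule R F) := hrange ⟨m, rfl⟩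
      have h2 : (Ideal.span {x} : Ideal R) • (⊤ : Submodule R F) ≤ LinearMap.range lx := by
        refine Submodule.smul_le.mpr ?_
        intro r hr f _
        obtain ⟨c, hc⟩ := Ideal.mem_span_singleton'.mp hr
        refine ⟨c • f, ?_⟩
        simp only [hlx, LinearMap.smul_apply, LinearMap.id_coe, id_eq, ← hc, mul_smul]
        rw [smul_comm]
      exact h2 h1
    let eL : F ≃ₗ[R] LinearMap.range lx := LinearEquiv.ofInjective lx hlxinj
    let ψ : M →ₗ[R] F := (eL.symm : LinearMap.range lx →ₗ[R] F) ∘ₗ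
      (φ.codRestrict (LinearMap.range lx) hner)
    have hψ : ∀ m, φ m = x • ψ m := by
      intro m
      have h1 : eL (ψ m) = φ.codRestrict (LinearMap.range lx) hner m :=
        eL.apply_symm_apply _
      have h2 := congrArg Subtype.val h1
      rw [LinearEquiv.ofInjective_apply] at h2
      simp only [LinearMap.codRestrict_apply] at h2
      simpa [hlx] using h2.symm
    -- ψ is split epi
    have hψepi : ∃ s : F →ₗ[R] M, ψ ∘ₗ s = LinearMap.id := by
      have hcomp : ψ ∘ₗ (x • (LinearMap.id : M →ₗ[R] M)) = φ := by
        ext m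
        simp only [LinearMap.comp_apply, LinearMap.smul_apply, LinearMap.id_apply, map_smul]
        exact (hψ m).symm
      rcases hfac M ‹Module.Finite R M› (x • LinearMap.id) ψ hcomp with ⟨r, hr⟩ | hs
      · exfalso
        have hsur : ∀ m : M, ∃ m', x • m' = m := by
          intro m
          refine ⟨r m, ?_⟩
          have h := LinearMap.congr_fun hr m
          simpa using h
        exact hMne (aux_subsingleton_of_smul_surjective hxmem hsur)
      · exact hs
    -- ψ is split mono
    have hψmono : ∃ r : F →ₗ[R] M, r ∘ₗ ψ = LinearMap.id := by
      have hcomp : lx ∘ₗ ψ = φ := by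
        ext m
        simp only [LinearMap.comp_apply, hlx, LinearMap.smul_apply, LinearMap.id_apply]
        exact (hψ m).symm
      rcases hfac F ‹Module.Finite R F› ψ lx hcomp with h | ⟨s, hs⟩
      · exact h
      · exfalso
        have hF : ∀ f : F, ∃ f', x • f' = f := by
          intro f
          refine ⟨s f, ?_⟩
          have h := LinearMap.congr_fun hs f
          simpa [hlx] using h
        haveI hFs : Subsingleton F := aux_subsingleton_of_smul_surjective hxmem hF
        exact hMne ⟨fun a b => hinj (Subsingleton.elim _ _)⟩
    obtain ⟨s, hs⟩ := hψepi
    obtain ⟨r, hr⟩ := hψmono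
    have hψinj : Function.Injective ψ := by
      intro a b hab
      have ha := LinearMap.congr_fun hr a
      have hb := LinearMap.congr_fun hr b
      simp only [LinearMap.comp_apply, LinearMap.id_apply] at ha hb
      rw [← ha, ← hb, hab]
    have hψsurj : Function.Surjective ψ := by
      intro f
      refine ⟨s f, ?_⟩
      have h := LinearMap.congr_fun hs f
      simpa using h
    let ψe : M ≃ₗ[R] F := LinearEquiv.ofBijective ψ ⟨hψinj, hψsurj⟩
    -- basis of F
    set ι := Module.Free.ChooseBasisIndex R F with hι
    set b : Module.Basis ι R F := Module.Free.chooseBasis R F with hb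
    haveI hιne : Nonempty ι := by
      by_contra hni
      haveI : IsEmpty ι := not_nonempty_iff.mp hni
      haveI : Subsingleton F := Equiv.subsingleton b.repr.toEquiv
      exact hMne ⟨fun a b => hinj (Subsingleton.elim _ _)⟩
    haveI hιs : Subsingleton ι := by
      by_contra hns
      haveI : Nontrivial ι := not_subsingleton_iff_nontrivial.mp hns
      obtain ⟨i₀, j, hij⟩ := exists_pair_ne ι
      set v : ι → F := fun i => if i = i₀ then x • b i₀ else b i with hv
      set w : ι → F := fun i => if i = i₀ then b i₀ else x • b i with hw
      set g : M →ₗ[R] F := (b.constr R v) ∘ₗ ψ with hg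
      set h : F →ₗ[R] F := b.constr R w with hh
      have hcomp : h ∘ₗ g = φ := by
        have h1 : h ∘ₗ (b.constr R v) = lx := by
          refine b.ext fun i => ?_
          rw [LinearMap.comp_apply, Module.Basis.constr_basis]
          by_cases hi : i = i₀
          · subst hi
            simp only [hv, if_pos rfl]
            rw [map_smul, hh, Module.Basis.constr_basis]
            simp only [hw, if_pos rfl, hlx, LinearMap.smul_apply, LinearMap.id_apply]
          · simp only [hv, if_neg hi]
            rw [hh, Module.Basis.constr_basis]
            simp only [hw, if_neg hi, hlx, LinearMap.smul_apply, LinearMap.id_apply]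
        have h2 : h ∘ₗ g = (h ∘ₗ b.constr R v) ∘ₗ ψ := by
          ext m; simp [hg]
        rw [h2, h1]
        ext m
        simp only [LinearMap.comp_apply, hlx, LinearMap.smul_apply, LinearMap.id_apply]
        exact (hψ m).symm
      rcases hfac F ‹Module.Finite R F› g h hcomp with ⟨r', hr'⟩ | ⟨s', hs'⟩
      · -- g split mono : contradiction
        set m₀ := ψe.symm (b i₀) with hm0
        have hψm0 : ψ m₀ = b i₀ := by
          have h1 := ψe.apply_symm_apply (b i₀)
          rwa [show ψe (ψe.symm (b i₀)) = ψ (ψe.symm (b i₀)) from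
            LinearEquiv.ofBijective_apply _ _] at h1
        have hg0 : g m₀ = x • b i₀ := by
          simp only [hg, LinearMap.comp_apply, hψm0]
          rw [Module.Basis.constr_basis]
          simp only [hv, if_pos rfl]
        have h2 : m₀ = x • r' (b i₀) := by
          have h3 := LinearMap.congr_fun hr' m₀
          rw [LinearMap.comp_apply, hg0, map_smul, LinearMap.id_apply] at h3
          exact h3.symm
        have h3 : b i₀ = x • ψ (r' (b i₀)) := by
          conv_lhs => rw [← hψm0, h2]
          exact map_smul ψ x _
        have h4 := congrArg (fun f => b.repr f i₀) h3
        simp only [Module.Basis.repr_self, Finsupp.single_eq_same, map_smul, Finsupp.smul_apply,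
          smul_eq_mul] at h4
        exact hxu (IsUnit.of_mul_eq_one _ h4.symm)
      · -- h split epi : contradiction
        have hcoord : ∀ f : F, b.repr (h f) j = x * b.repr f j := by
          have heq : (b.coord j) ∘ₗ h = x • (b.coord j) := by
            refine b.ext fun i => ?_
            rw [LinearMap.comp_apply, hh, Module.Basis.constr_basis, LinearMap.smul_apply]
            by_cases hi : i = i₀
            · subst hi
              simp only [hw, if_pos rfl, Module.Basis.coord_apply, Module.Basis.repr_self,
                Finsupp.single_eq_of_ne' hij, smul_zero]
            · simp only [hw, if_neg hi, Module.Basis.coord_apply, map_smul, Finsupp.smul_apply,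
                Module.Basis.repr_self]
          intro f
          have h5 := LinearMap.congr_fun heq f
          simpa [Module.Basis.coord_apply, smul_eq_mul] using h5
        have h6 : h (s' (b j)) = b j := by
          have := LinearMap.congr_fun hs' (b j)
          simpa using this
        have h5 := hcoord (s' (b j))
        rw [h6] at h5
        simp only [Module.Basis.repr_self, Finsupp.single_eq_same] at h5
        exact hxu (IsUnit.of_mul_eq_one _ h5.symm)
    haveI : Unique ι := uniqueOfSubsingleton (Classical.arbitrary ι)
    let πe : F ≃ₗ[R] R := b.repr ≪≫ₗ (Finsupp.LinearEquiv.finsuppUnique R R ι)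
    refine ⟨ψe ≪≫ₗ πe ≪≫ₗ (LinearEquiv.toSpanNonzeroSingleton R R x hx0), πe, fun z => ?_⟩
    show (Ideal.span {x} : Ideal R).subtype
      ((LinearEquiv.toSpanNonzeroSingleton R R x hx0) (πe (ψe z))) = πe (φ z)
    rw [hψ z, map_smul, Submodule.subtype_apply, LinearEquiv.toSpanNonzeroSingleton_apply]
    show (πe (ψe z)) • x = x • πe (ψ z)
    rw [show ψe z = ψ z from LinearEquiv.ofBijective_apply _ _]
    rw [smul_eq_mul, smul_eq_mul, mul_comm]
  · rintro ⟨η, π, hcomm⟩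
    have hkey : ∀ z : M, ((η z : R)) = π (φ z) := fun z => hcomm z
    refine ⟨?_, ?_, ?_⟩
    · rintro ⟨r, hr⟩
      set q : R →ₗ[R] R := (π : F →ₗ[R] R) ∘ₗ φ ∘ₗ r ∘ₗ (π.symm : R →ₗ[R] F) with hq
      have hqapp : ∀ t : R, q t = π (φ (r (π.symm t))) := fun t => rfl
      have hqx : q x = x := by
        obtain ⟨z, hz⟩ := η.surjective ⟨x, Ideal.subset_span (Set.mem_singleton x)⟩
        have hπx : π (φ z) = x := by
          rw [← hkey z, hz]
        have h1 : π.symm x = φ z := by rw [← hπx, π.symm_apply_apply]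
        have h2 : r (φ z) = z := by
          have := LinearMap.congr_fun hr z
          simpa using this
        rw [hqapp, h1, h2, hπx]
      have hq1 : q x = x * q 1 := by
        have : q (x • (1 : R)) = x • q 1 := map_smul q x 1
        simpa [smul_eq_mul] using this
      have he1 : q 1 = 1 := by
        apply mul_left_cancel₀ hx0
        rw [← hq1, hqx, mul_one]
      have hq1mem : q 1 ∈ Ideal.span {x} := by
        rw [hqapp, ← hkey]
        exact (η (r (π.symm 1))).2
      rw [he1] at hq1mem
      exact hxu (isUnit_of_dvd_one (Ideal.mem_span_singleton.mp hq1mem))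
    · rintro ⟨s, hs⟩
      have h2 : φ (s (π.symm 1)) = π.symm 1 := by
        have := LinearMap.congr_fun hs (π.symm 1)
        simpa using this
      have h3 : π (φ (s (π.symm 1))) = 1 := by rw [h2, π.apply_symm_apply]
      have h1 : (1 : R) ∈ Ideal.span {x} := by
        rw [← h3, ← hkey]
        exact (η (s (π.symm 1))).2
      exact hxu (isUnit_of_dvd_one (Ideal.mem_span_singleton.mp h1))
    · intro L _ _ hL g h hgh
      by_cases hsurj : Function.Surjective h
      · right
        exact Module.projective_lifting_property h LinearMap.id hsurj
      · left
        have hne : LinearMap.range ((π : F →ₗ[R] R) ∘ₗ h) ≠ ⊤ := by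
          intro htop
          apply hsurj
          intro f
          have hmem : π f ∈ LinearMap.range ((π : F →ₗ[R] R) ∘ₗ h) := htop ▸ Submodule.mem_top
          obtain ⟨l, hl⟩ := hmem
          exact ⟨l, π.injective (by simpa using hl)⟩
        have hle : LinearMap.range ((π : F →ₗ[R] R) ∘ₗ h) ≤ Ideal.span {x} :=
          hx ▸ IsLocalRing.le_maximalIdeal hne
        set h'' : L →ₗ[R] (Ideal.span {x} : Ideal R) :=
          ((π : F →ₗ[R] R) ∘ₗ h).codRestrict (Ideal.span {x} : Ideal R)
            (fun l => hle ⟨l, rfl⟩) with hh''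
        refine ⟨(η.symm : (Ideal.span {x} : Ideal R) →ₗ[R] M) ∘ₗ h'', ?_⟩
        ext z
        simp only [LinearMap.comp_apply, LinearEquiv.coe_coe, LinearMap.id_apply]
        have hval : h'' (g z) = η z := by
          apply Subtype.ext
          have h7 : h (g z) = φ z := by
            have := LinearMap.congr_fun hgh z
            simpa using this
          show π (h (g z)) = ((η z : R))
          rw [h7, hkey z]
        rw [hval, η.symm_apply_apply]
end

section
/- Let (R, m, k) be a commutative noetherian local ring. If R is isomorphic, as an R-module, to a direct summand of its maximal ideal m, then R is a discrete valuation ring (in particular, m is indecomposable and m ≅ R as R-modules). -/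
universe u

/-- If a commutative noetherian local ring `(R, 𝔪)` is isomorphic, as an `R`-module, to a
direct summand of its maximal ideal `𝔪`, then `R` is a discrete valuation ring; in
particular `𝔪` is indecomposable and `𝔪 ≅ R` as `R`-modules. -/
theorem dvr_of_free_summand_of_maximalIdeal
    {R : Type u} [CommRing R] [IsNoetherianRing R] [IsLocalRing R]
    (h : ∃ (K : Type u) (_ : AddCommGroup K) (_ : Module R K),
      Nonempty ((IsLocalRing.maximalIdeal R) ≃ₗ[R] (R × K))) :
    (∃ _ : IsDomain R, IsDiscreteValuationRing R) ∧
    IsIndecomposableModule R (IsLocalRing.maximalIdeal R) ∧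
    Nonempty ((IsLocalRing.maximalIdeal R) ≃ₗ[R] R) := by
  obtain ⟨K, _, _, ⟨e⟩⟩ := h
  set M := IsLocalRing.maximalIdeal R with hM
  let f : M →ₗ[R] R := (LinearMap.fst R R K) ∘ₗ e.toLinearMap
  let a : M := e.symm (1, 0)
  have hfa : f a = 1 := by simp [f, a]
  have hsmul : ∀ (r : R), f (r • a) = r := by
    intro r; rw [map_smul, hfa, smul_eq_mul, mul_one]
  -- f is injective
  have hker : ∀ b : M, f b = 0 → b = 0 := by
    intro b hb
    have key : (a : R) • b = (b : R) • a := by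
      apply Subtype.ext
      show (a : R) * (b : R) = (b : R) * (a : R)
      ring
    have h1 : f ((a : R) • b) = 0 := by rw [map_smul, hb, smul_zero]
    have h2 : f ((b : R) • a) = (b : R) := hsmul _
    have : (b : R) = 0 := by rw [← h2, ← key, h1]
    exact Subtype.ext this
  have hinj : Function.Injective f := by
    intro x y hxy
    have : x - y = 0 := hker _ (by rw [map_sub, hxy, sub_self])
    exact sub_eq_zero.mp this
  have hsurj : Function.Surjective f := fun r => ⟨r • a, hsmul r⟩
  let e' : M ≃ₗ[R] R := LinearEquiv.ofBijective f ⟨hinj, hsurj⟩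
  -- the maximal ideal is spanned by a
  have hspan : IsLocalRing.maximalIdeal R = Ideal.span {(a : R)} := by
    apply le_antisymm
    · intro x hx
      set b : M := ⟨x, hx⟩ with hb
      have hba : b = f b • a := by
        have := hker (b - f b • a) (by rw [map_sub, hsmul, sub_self])
        rwa [sub_eq_zero] at this
      have hx' : x = f b * (a : R) := congrArg Subtype.val hba
      rw [hx']
      exact Ideal.mem_span_singleton'.mpr ⟨f b, rfl⟩
    · rw [Ideal.span_le, Set.singleton_subset_iff]
      exact a.2
  -- a is a nonzerodivisor
  have hnzd : ∀ r : R, r * (a : R) = 0 → r = 0 := by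
    intro r hr
    have h0 : r • a = 0 := Subtype.ext hr
    have := hsmul r
    rw [h0, map_zero] at this
    exact this.symm
  have hpow : ∀ n : ℕ, (a : R) ^ n ≠ 0 := by
    intro n
    induction n with
    | zero => simp
    | succ k ih =>
      intro hc
      exact ih (hnzd _ (by rw [← pow_succ]; exact hc))
  have ha0 : (a : R) ≠ 0 := by simpa using hpow 1
  -- R is a domain
  have hKrull : (⨅ n : ℕ, (IsLocalRing.maximalIdeal R) ^ n) = ⊥ :=
    Ideal.iInf_pow_eq_bot_of_isLocalRing _ (Ideal.IsMaximal.ne_top (IsLocalRing.maximalIdeal.isMaximal R))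
  have hfact : ∀ x : R, x ≠ 0 → ∃ (u : R) (n : ℕ), IsUnit u ∧ x = u * (a : R) ^ n := by
    intro x hx
    have hex : ∃ n : ℕ, x ∉ (IsLocalRing.maximalIdeal R) ^ n := by
      by_contra hc
      push_neg at hc
      have : x ∈ (⨅ n : ℕ, (IsLocalRing.maximalIdeal R) ^ n) := Ideal.mem_iInf.mpr hc
      rw [hKrull] at this
      exact hx this
    classical
    set n := Nat.find hex with hn
    have hnot : x ∉ (IsLocalRing.maximalIdeal R) ^ n := Nat.find_spec hex
    have hn0 : n ≠ 0 := by
      intro hc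
      apply hnot
      rw [hc, pow_zero, Ideal.one_eq_top]
      trivial
    have hmem : x ∈ (IsLocalRing.maximalIdeal R) ^ (n - 1) := by
      by_contra hc
      have hle : n ≤ n - 1 := hn ▸ Nat.find_le hc
      omega
    rw [hspan, Ideal.span_singleton_pow, Ideal.mem_span_singleton'] at hmem
    obtain ⟨u, hu⟩ := hmem
    refine ⟨u, n - 1, ?_, hu.symm⟩
    by_contra hnu
    apply hnot
    have hum : u ∈ IsLocalRing.maximalIdeal R := by
      rwa [IsLocalRing.mem_maximalIdeal, mem_nonunits_iff]
    have : x ∈ (IsLocalRing.maximalIdeal R) * (IsLocalRing.maximalIdeal R) ^ (n - 1) := by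
      rw [← hu]
      exact Ideal.mul_mem_mul hum (by
        rw [hspan, Ideal.span_singleton_pow]
        exact Ideal.mem_span_singleton'.mpr ⟨1, one_mul _⟩)
    rw [← pow_succ'] at this
    have hn1 : n - 1 + 1 = n := by omega
    rwa [hn1] at this
  have hdomain : IsDomain R := by
    have : NoZeroDivisors R := by
      constructor
      intro x y hxy
      by_contra hc
      push_neg at hc
      obtain ⟨hx, hy⟩ := hc
      obtain ⟨u, n, hu, hxe⟩ := hfact x hx
      obtain ⟨v, m, hv, hye⟩ := hfact y hy
      have : u * v * (a : R) ^ (n + m) = 0 := by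
        rw [pow_add, ← hxy, hxe, hye]; ring
      have h1 : (a : R) ^ (n + m) = 0 := by
        obtain ⟨uu, huu⟩ := hu
        obtain ⟨vv, hvv⟩ := hv
        have := congrArg (fun z => (↑uu⁻¹ : R) * ((↑vv⁻¹ : R) * z)) this
        simp only [mul_zero] at this
        rw [← this, ← huu, ← hvv]
        linear_combination (-(↑vv⁻¹ * ↑vv * (a : R) ^ (n + m))) * uu.inv_mul - (a : R) ^ (n + m) * vv.inv_mul
      exact hpow _ h1
    exact NoZeroDivisors.to_isDomain R
  -- R is not a field
  have hnf : ¬ IsField R := by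
    intro hf
    have := IsLocalRing.isField_iff_maximalIdeal_eq.mp hf
    rw [hspan] at this
    exact ha0 (by
      have : (a : R) ∈ (⊥ : Ideal R) := this ▸ Ideal.mem_span_singleton_self _
      simpa using this)
  have hdvr : IsDiscreteValuationRing R := by
    have := (IsDiscreteValuationRing.TFAE R hnf).out 0 4
    exact this.mpr ⟨⟨(a : R), hspan⟩⟩
  refine ⟨⟨hdomain, hdvr⟩, ⟨?_, ?_⟩, ⟨e'⟩⟩
  · exact nontrivial_of_ne a 0 (fun hc => one_ne_zero (by rw [← hfa, hc, map_zero]))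
  · intro A B hAB
    -- transport to ideals of R
    let A' : Ideal R := Submodule.map (e' : M →ₗ[R] R) A
    let B' : Ideal R := Submodule.map (e' : M →ₗ[R] R) B
    have hmapcompl : IsCompl A' B' :=
      (Submodule.orderIsoMapComap e').isCompl_iff.mp hAB
    have hsup : A' ⊔ B' = ⊤ := hmapcompl.sup_eq_top
    have hinf : A' ⊓ B' = ⊥ := hmapcompl.inf_eq_bot
    obtain ⟨x, hx, y, hy, hxy⟩ := Submodule.mem_sup.mp (hsup ▸ Submodule.mem_top (x := (1 : R)))
    have hxy0 : x * y = 0 := by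
      have h1 : x * y ∈ A' := Ideal.mul_mem_right _ _ hx
      have h2 : x * y ∈ B' := Ideal.mul_mem_left _ _ hy
      have : x * y ∈ A' ⊓ B' := ⟨h1, h2⟩
      rw [hinf] at this
      simpa using this
    have ideal_eq : ∀ z : R, IsUnit z → z ∈ A' → A' = ⊤ := fun z hz hmem =>
      Ideal.eq_top_of_isUnit_mem _ hmem hz
    have hbot : A' = ⊥ ∨ B' = ⊥ := by
      rcases IsLocalRing.isUnit_or_isUnit_one_sub_self x with hu | hu
      · right
        have hAt : A' = ⊤ := Ideal.eq_top_of_isUnit_mem _ hx hu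
        rw [← hinf, hAt, top_inf_eq]
      · left
        have hyx : (1 : R) - x = y := by linear_combination -hxy
        have hBt : B' = ⊤ := Ideal.eq_top_of_isUnit_mem _ hy (hyx ▸ hu)
        rw [← hinf, hBt, inf_top_eq]
    have backA : A' = ⊥ → A = ⊥ := by
      intro hA
      rw [Submodule.eq_bot_iff]
      intro x hxA
      have : e' x ∈ A' := Submodule.mem_map_of_mem hxA
      rw [hA, Submodule.mem_bot] at this
      exact e'.injective (by simpa using this)
    have backB : B' = ⊥ → B = ⊥ := by
      intro hB
      rw [Submodule.eq_bot_iff]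
      intro x hxB
      have : e' x ∈ B' := Submodule.mem_map_of_mem hxB
      rw [hB, Submodule.mem_bot] at this
      exact e'.injective (by simpa using this)
    exact hbot.imp backA backB
end
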